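/- arXiv:1610.07100 — 7 statements merged into one kernel-verified Lean document; each statement's English description precedes it below -/
import Mathlib

section
/- Let N ≥ 2 be even. Consider the Ising instance on N variables with h i = 0 for all i and J i j = 1 for all i ≠ j, so H(S) = ∑_{i<j} S i * S j. Then an assignment S is a local minimum of this instance if and only if ∑_i S i = 0; moreover every local minimum is a global minimum, and consequently the number of local minima is exactly the binomial coefficient (N choose N/2). -/
open Finset

/-- An assignment gives each variable the value `-1` or `1`. -/
def IsAssignment {N : ℕ} (S : Fin N → ℝ) : Prop := ∀ i, S i = -1 ∨ S i = 1

/-- Energy of an Ising instance: `H(S) = ∑ i, h i * S i + ∑_{i<j} J i j * S i * S j`. -/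
noncomputable def energy {N : ℕ} (h : Fin N → ℝ) (J : Fin N → Fin N → ℝ)
    (S : Fin N → ℝ) : ℝ :=
  ∑ i, h i * S i + ∑ i, ∑ j, if i < j then J i j * S i * S j else 0

/-- The assignment obtained from `S` by flipping the spin at `i`. -/
noncomputable def flipAt {N : ℕ} (S : Fin N → ℝ) (i : Fin N) : Fin N → ℝ :=
  Function.update S i (-(S i))

/-- A local minimum: flipping any single variable strictly increases the energy. -/
def IsingLocalMin {N : ℕ} (h : Fin N → ℝ) (J : Fin N → Fin N → ℝ) (S : Fin N → ℝ) : Prop :=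
  IsAssignment S ∧ ∀ i, energy h J S < energy h J (flipAt S i)

/-- A global minimum: minimal energy among all assignments. -/
def IsingGlobalMin {N : ℕ} (h : Fin N → ℝ) (J : Fin N → Fin N → ℝ) (S : Fin N → ℝ) : Prop :=
  IsAssignment S ∧ ∀ S', IsAssignment S' → energy h J S ≤ energy h J S'

/-- Degree of variable `i` in the graph of the instance: the number of `j ≠ i` with `J i j ≠ 0`. -/
noncomputable def degreeJ {N : ℕ} (J : Fin N → Fin N → ℝ) (i : Fin N) : ℕ :=
  Set.ncard {j | j ≠ i ∧ J i j ≠ 0}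

lemma energy_eq {N : ℕ} (h : Fin N → ℝ) (J : Fin N → Fin N → ℝ) (hh : ∀ i, h i = 0)
    (hJ : ∀ i j, i ≠ j → J i j = 1) (S : Fin N → ℝ) (hS : IsAssignment S) :
    energy h J S = ((∑ i, S i)^2 - N) / 2 := by
  have hsq : ∀ i, S i * S i = 1 := fun i => by rcases hS i with h|h <;> rw [h] <;> ring
  have h1 : energy h J S = ∑ i, ∑ j, (if i < j then S i * S j else 0) := by
    unfold energy
    rw [Finset.sum_congr rfl (fun i _ => by rw [hh i, zero_mul]), Finset.sum_const_zero, zero_add]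
    refine Finset.sum_congr rfl fun i _ => Finset.sum_congr rfl fun j _ => ?_
    by_cases hij : i < j
    · simp [hij, hJ i j hij.ne]
    · simp [hij]
  have h2 : (∑ i, S i)^2 = ∑ i, ∑ j, S i * S j := by
    rw [sq, Finset.sum_mul_sum]
  have h4 : (∑ i, ∑ j, (if j < i then S i * S j else 0)) =
      ∑ i, ∑ j, (if i < j then S i * S j else 0) := by
    rw [Finset.sum_comm]
    refine Finset.sum_congr rfl fun i _ => Finset.sum_congr rfl fun j _ => ?_
    by_cases hij : i < j <;> simp [hij, mul_comm]
  have h3 : ∑ i, ∑ j, S i * S j =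
      2 * (∑ i, ∑ j, (if i < j then S i * S j else 0)) + N := by
    have hrow : ∀ i : Fin N, ∑ j, S i * S j =
        (∑ j, (if i < j then S i * S j else 0)) +
        (∑ j, (if j < i then S i * S j else 0)) + 1 := by
      intro i
      have hd : (∑ j, (if j = i then S i * S j else 0)) = 1 := by
        rw [Finset.sum_ite_eq' Finset.univ i (fun j => S i * S j) ]
        simp [hsq i]
      rw [← hd, ← Finset.sum_add_distrib, ← Finset.sum_add_distrib]
      refine Finset.sum_congr rfl fun j _ => ?_
      rcases lt_trichotomy i j with hij | hij | hij
      · simp [hij, asymm hij, (ne_of_gt hij)]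
      · simp [hij.symm, lt_irrefl]
      · simp [hij, asymm hij, (ne_of_lt hij)]
    rw [Finset.sum_congr rfl (fun i _ => hrow i)]
    rw [Finset.sum_add_distrib, Finset.sum_add_distrib, h4]
    simp [Finset.card_univ]
    ring
  rw [h1]
  rw [h2] at *
  rw [h3]
  ring

lemma flip_assignment {N : ℕ} (S : Fin N → ℝ) (hS : IsAssignment S) (i : Fin N) :
    IsAssignment (flipAt S i) := by
  intro j
  unfold flipAt
  rcases eq_or_ne j i with rfl | hji
  · simp only [Function.update_self]
    rcases hS j with h | h <;> simp [h]
  · rw [Function.update_of_ne hji]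
    exact hS j

lemma sum_flip {N : ℕ} (S : Fin N → ℝ) (i : Fin N) :
    ∑ j, flipAt S i j = (∑ j, S j) - 2 * S i := by
  unfold flipAt
  rw [Finset.sum_update_of_mem (Finset.mem_univ i)]
  rw [Finset.sum_sdiff_eq_sub (Finset.singleton_subset_iff.mpr (Finset.mem_univ i))]
  simp
  ring

lemma sum_eq_card {N : ℕ} (S : Fin N → ℝ) (hS : IsAssignment S) :
    ∑ i, S i = 2 * ((Finset.univ.filter (fun i => S i = 1)).card : ℝ) - N := by
  have h1 : ∀ i, S i = 2 * (if S i = 1 then (1:ℝ) else 0) - 1 := fun i => by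
    rcases hS i with h | h <;> norm_num [h]
  rw [Finset.sum_congr rfl fun i _ => h1 i, Finset.sum_sub_distrib, ← Finset.mul_sum,
    Finset.sum_boole]
  simp [Finset.card_univ]

theorem stmt0' (N : ℕ) (hN2 : 2 ≤ N) (hNeven : Even N)
    (h : Fin N → ℝ) (J : Fin N → Fin N → ℝ)
    (hh : ∀ i, h i = 0)
    (hJ : ∀ i j, i ≠ j → J i j = 1)
    (hJdiag : ∀ i, J i i = 0) :
    (∀ S : Fin N → ℝ, IsAssignment S →
      ((IsAssignment S ∧ ∀ i, energy h J S < energy h J (flipAt S i)) ↔ ∑ i, S i = 0)) := by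
  intro S hS
  have hsq : ∀ i, S i * S i = 1 := fun i => by rcases hS i with h'|h' <;> rw [h'] <;> ring
  constructor
  · rintro ⟨-, hloc⟩
    have hcond : ∀ i, (∑ j, S j) * S i < 1 := by
      intro i
      have hli := hloc i
      rw [energy_eq h J hh hJ S hS, energy_eq h J hh hJ _ (flip_assignment S hS i),
        sum_flip] at hli
      nlinarith [hsq i]
    have hsum := sum_eq_card S hS
    set p := (Finset.univ.filter (fun i => S i = 1)).card with hp
    have hup : 2 * p ≤ N := by
      by_cases he : ∃ i, S i = 1
      · obtain ⟨i, hi⟩ := he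
        have hc := hcond i
        rw [hsum, hi, mul_one] at hc
        have : (2 * p : ℝ) < N + 1 := by push_cast; linarith
        have : (2 * p : ℕ) < N + 1 := by exact_mod_cast this
        omega
      · push_neg at he
        have hall : ∀ i, S i = -1 := fun i => (hS i).resolve_right (he i)
        have hi0 : (0 : ℕ) < N := by omega
        have hc := hcond ⟨0, hi0⟩
        rw [hall ⟨0, hi0⟩] at hc
        have hsN : ∑ j, S j = -N := by
          rw [Finset.sum_congr rfl fun i _ => hall i]
          simp [Finset.card_univ]
        rw [hsN] at hc
        have : (2 : ℝ) ≤ N := by exact_mod_cast hN2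
        nlinarith
    have hlo : N ≤ 2 * p := by
      by_cases he : ∃ i, S i = -1
      · obtain ⟨i, hi⟩ := he
        have hc := hcond i
        rw [hsum, hi] at hc
        have : (N : ℝ) < 2 * p + 1 := by push_cast at hc ⊢; linarith
        have : N < 2 * p + 1 := by exact_mod_cast this
        omega
      · push_neg at he
        have hall : ∀ i, S i = 1 := fun i => (hS i).resolve_left (he i)
        have hi0 : (0 : ℕ) < N := by omega
        have hc := hcond ⟨0, hi0⟩
        rw [hall ⟨0, hi0⟩] at hc
        have hsN : ∑ j, S j = N := by
          rw [Finset.sum_congr rfl fun i _ => hall i]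
          simp [Finset.card_univ]
        rw [hsN] at hc
        have : (2 : ℝ) ≤ N := by exact_mod_cast hN2
        nlinarith
    have h2p : 2 * p = N := le_antisymm hup hlo
    rw [hsum]
    have : ((2 * p : ℕ) : ℝ) = N := by exact_mod_cast congrArg (Nat.cast : ℕ → ℝ) h2p
    push_cast at this ⊢
    linarith
  · intro hsum0
    refine ⟨hS, fun i => ?_⟩
    rw [energy_eq h J hh hJ S hS, energy_eq h J hh hJ _ (flip_assignment S hS i),
      sum_flip, hsum0]
    nlinarith [hsq i]

/-- for the instance with `h = 0` and `J i j = 1` for `i ≠ j` (`N ≥ 2` even),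
an assignment is a local minimum iff its spins sum to zero, every local minimum is a global
minimum, and the number of local minima is exactly `N.choose (N / 2)`. -/
theorem stmt0 (N : ℕ) (hN2 : 2 ≤ N) (hNeven : Even N)
    (h : Fin N → ℝ) (J : Fin N → Fin N → ℝ)
    (hh : ∀ i, h i = 0)
    (hJ : ∀ i j, i ≠ j → J i j = 1)
    (hJdiag : ∀ i, J i i = 0) :
    (∀ S : Fin N → ℝ, IsAssignment S →
      (IsingLocalMin h J S ↔ ∑ i, S i = 0)) ∧
    (∀ S, IsingLocalMin h J S → IsingGlobalMin h J S) ∧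
    Set.ncard {S : Fin N → ℝ | IsingLocalMin h J S} = N.choose (N / 2) := by
  have key := stmt0' N hN2 hNeven h J hh hJ hJdiag
  refine ⟨fun S hS => key S hS, ?_, ?_⟩
  · rintro S hSmin
    have hS := hSmin.1
    have hsum0 := (key S hS).mp hSmin
    refine ⟨hS, fun S' hS' => ?_⟩
    rw [energy_eq h J hh hJ S hS, energy_eq h J hh hJ S' hS', hsum0]
    nlinarith [sq_nonneg (∑ i, S' i)]
  · obtain ⟨k, hk⟩ := hNeven
    have hNk : N / 2 = k := by omega
    set f : Finset (Fin N) → (Fin N → ℝ) := fun A i => if i ∈ A then (1:ℝ) else -1 with hf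
    have hinj : Function.Injective f := by
      intro A B hAB
      ext i
      have hi := congrFun hAB i
      by_cases hA : i ∈ A <;> by_cases hB : i ∈ B <;>
        simp [hf, hA, hB] at hi ⊢ <;> norm_num at hi
    have hset : {S : Fin N → ℝ | IsingLocalMin h J S} = f '' {A | A.card = N / 2} := by
      ext S
      simp only [Set.mem_setOf_eq, Set.mem_image]
      constructor
      · intro hSmin
        have hS := hSmin.1
        have hsum0 := (key S hS).mp hSmin
        refine ⟨Finset.univ.filter (fun i => S i = 1), ?_, ?_⟩
        · have hsc := sum_eq_card S hS
          rw [hsum0] at hsc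
          have : ((2 * (Finset.univ.filter (fun i => S i = 1)).card : ℕ) : ℝ) = N := by
            push_cast; linarith
          have h2 : 2 * (Finset.univ.filter (fun i => S i = 1)).card = N := by
            exact_mod_cast this
          omega
        · funext i
          rcases hS i with h' | h' <;> simp [hf, h'] <;> norm_num
      · rintro ⟨A, hA, rfl⟩
        have hassign : IsAssignment (f A) := fun i => by
          by_cases hi : i ∈ A <;> simp [hf, hi]
        refine (key _ hassign).mpr ?_
        have hsc := sum_eq_card (f A) hassign
        have hcard : (Finset.univ.filter (fun i => f A i = 1)) = A := by
          ext i
          by_cases hi : i ∈ A <;> simp [hf, hi] <;> norm_num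
        rw [hsc, hcard, hA, hNk]
        rw [hk]
        push_cast
        ring
    rw [hset, Set.ncard_image_of_injective _ hinj]
    have hpc : {A : Finset (Fin N) | A.card = N / 2} =
        ↑(Finset.powersetCard (N / 2) (Finset.univ : Finset (Fin N))) := by
      ext A
      simp [Finset.mem_powersetCard, Finset.subset_univ]
    rw [hpc, Set.ncard_coe_finset, Finset.card_powersetCard, Finset.card_univ,
      Fintype.card_fin]
end

section
/- Let d ≥ 1 be an integer with d + 1 even, and let N be a positive multiple of d + 1. Then there exists an Ising instance on N variables whose graph has maximum degree at most d and which has at least ((d+1) choose (d+1)/2)^{N/(d+1)} local minima, each of which is also a global minimum. -/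
open Finset

lemma double_sum_lt {N : ℕ} (f : Fin N → Fin N → ℝ) (hsymm : ∀ i j, f i j = f j i)
    (hdiag : ∀ i, f i i = 0) :
    2 * (∑ i, ∑ j, if i < j then f i j else 0) = ∑ i, ∑ j, f i j := by
  have key : ∀ i j : Fin N, f i j = (if i < j then f i j else 0) + (if j < i then f i j else 0) := by
    intro i j
    rcases lt_trichotomy i j with h|h|h
    · simp [h, not_lt_of_gt h]
    · subst h; simp [hdiag]
    · simp [h, not_lt_of_gt h]
  have h2 : ∑ i, ∑ j, f i j
      = (∑ i, ∑ j, if i < j then f i j else 0) + (∑ i, ∑ j, if j < i then f i j else 0) := by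
    rw [← Finset.sum_add_distrib]
    refine Finset.sum_congr rfl fun i _ => ?_
    rw [← Finset.sum_add_distrib]
    exact Finset.sum_congr rfl fun j _ => key i j
  have h3 : (∑ i, ∑ j, if j < i then f i j else 0) = ∑ i, ∑ j, if i < j then f i j else 0 := by
    rw [Finset.sum_comm]
    refine Finset.sum_congr rfl fun i _ => Finset.sum_congr rfl fun j _ => ?_
    rw [hsymm]
  rw [h2, h3]; ring

lemma flip_energy {N : ℕ} (h : Fin N → ℝ) (J : Fin N → Fin N → ℝ)
    (hsymm : ∀ i j, J i j = J j i) (hdiag : ∀ i, J i i = 0)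
    (S : Fin N → ℝ) (i : Fin N) :
    energy h J (flipAt S i) = energy h J S - 2 * S i * (h i + ∑ j, J i j * S j) := by
  have hup : ∀ j, flipAt S i j = if j = i then -(S i) else S j := by
    intro j; by_cases hj : j = i
    · subst hj; simp [flipAt]
    · rw [if_neg hj]; exact Function.update_of_ne hj _ S
  unfold energy
  simp only [hup]
  have lin : ∑ j, h j * (if j = i then -(S i) else S j)
      = (∑ j, h j * S j) + (-2 * (h i * S i)) := by
    have key : ∀ j : Fin N, h j * (if j = i then -(S i) else S j)
        = h j * S j + (if j = i then -2 * (h i * S i) else 0) := by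
      intro j; by_cases hj : j = i
      · rw [if_pos hj, if_pos hj, hj]; ring
      · rw [if_neg hj, if_neg hj, add_zero]
    simp only [key, Finset.sum_add_distrib, Finset.sum_ite_eq' Finset.univ i, Finset.mem_univ,
      if_true]
  have quadkey : ∀ a b : Fin N,
      (if a < b then J a b * (if a = i then -(S i) else S a) * (if b = i then -(S i) else S b) else 0)
      = (if a < b then J a b * S a * S b else 0)
        + (if a = i then (if a < b then -2 * S i * (J i b * S b) else 0) else 0)
        + (if b = i then (if a < b then -2 * S i * (J i a * S a) else 0) else 0) := by
    intro a b
    by_cases ha : a = i <;> by_cases hb : b = i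
    · rw [ha, hb]; simp
    · rw [if_pos ha, if_neg hb, if_pos ha, if_neg hb, add_zero]
      by_cases hab : a < b
      · rw [if_pos hab, if_pos hab, if_pos hab, ha]; ring
      · rw [if_neg hab, if_neg hab, if_neg hab, add_zero]
    · rw [if_neg ha, if_pos hb, if_neg ha, if_pos hb, add_zero]
      by_cases hab : a < b
      · rw [if_pos hab, if_pos hab, if_pos hab, hb, hsymm a i]; ring
      · rw [if_neg hab, if_neg hab, if_neg hab, add_zero]
    · rw [if_neg ha, if_neg hb, if_neg ha, if_neg hb, add_zero, add_zero]
  have quad : (∑ a, ∑ b, if a < b then J a b * (if a = i then -(S i) else S a) * (if b = i then -(S i) else S b) else 0)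
      = (∑ a, ∑ b, if a < b then J a b * S a * S b else 0)
        + (-2 * S i * (∑ j, J i j * S j)) := by
    simp only [quadkey, Finset.sum_add_distrib]
    have e2 : (∑ a, ∑ b : Fin N, if a = i then (if a < b then -2 * S i * (J i b * S b) else 0) else 0)
        = ∑ b, if i < b then -2 * S i * (J i b * S b) else 0 := by
      rw [Finset.sum_comm]
      refine Finset.sum_congr rfl fun b _ => ?_
      rw [Finset.sum_ite_eq' Finset.univ i]
      simp
    have e3 : (∑ a, ∑ b : Fin N, if b = i then (if a < b then -2 * S i * (J i a * S a) else 0) else 0)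
        = ∑ a, if a < i then -2 * S i * (J i a * S a) else 0 := by
      refine Finset.sum_congr rfl fun a _ => ?_
      rw [Finset.sum_ite_eq' Finset.univ i]
      simp
    rw [e2, e3]
    have comb : (∑ b, if i < b then -2 * S i * (J i b * S b) else 0)
        + (∑ a, if a < i then -2 * S i * (J i a * S a) else 0)
        = ∑ j, -2 * S i * (J i j * S j) := by
      rw [← Finset.sum_add_distrib]
      refine Finset.sum_congr rfl fun j _ => ?_
      rcases lt_trichotomy i j with hj|hj|hj
      · simp [hj, not_lt_of_gt hj]
      · subst hj; simp [hdiag]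
      · simp [hj, not_lt_of_gt hj]
    rw [add_assoc, comb, ← Finset.mul_sum]
  rw [lin, quad]; ring

/-- for `d ≥ 1` with `d + 1` even and `N` a positive multiple of `d + 1`, there
is an Ising instance on `N` variables of maximum degree at most `d` with at least
`((d+1).choose ((d+1)/2)) ^ (N/(d+1))` local minima, each of which is a global minimum. -/
theorem stmt1 (d N : ℕ) (hd : 1 ≤ d) (hde : Even (d + 1)) (hN : 0 < N)
    (hdvd : (d + 1) ∣ N) :
    ∃ (h : Fin N → ℝ) (J : Fin N → Fin N → ℝ),
      (∀ i j, J i j = J j i) ∧ (∀ i, J i i = 0) ∧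
      (∀ i, degreeJ J i ≤ d) ∧
      ((d + 1).choose ((d + 1) / 2)) ^ (N / (d + 1)) ≤
        Set.ncard {S : Fin N → ℝ | IsingLocalMin h J S} ∧
      ∀ S, IsingLocalMin h J S → IsingGlobalMin h J S := by
  classical
  obtain ⟨m, hm⟩ := hdvd
  have hnm : m * (d + 1) = N := by rw [hm]; ring
  have hmN : N / (d + 1) = m := by rw [hm, Nat.mul_div_cancel_left _ (Nat.succ_pos d)]
  let e : Fin m × Fin (d + 1) ≃ Fin N := finProdFinEquiv.trans (finCongr hnm)
  let J : Fin N → Fin N → ℝ := fun i j =>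
    if (e.symm i).1 = (e.symm j).1 ∧ i ≠ j then 1 else 0
  let M : (Fin N → ℝ) → Fin m → ℝ := fun S b => ∑ x : Fin (d + 1), S (e (b, x))
  have hJsymm : ∀ i j, J i j = J j i := by
    intro i j
    by_cases hc : (e.symm i).1 = (e.symm j).1 ∧ i ≠ j
    · show (if _ then _ else _) = (if _ then _ else _)
      rw [if_pos hc, if_pos ⟨hc.1.symm, hc.2.symm⟩]
    · show (if _ then _ else _) = (if _ then _ else _)
      rw [if_neg hc, if_neg (fun hc' => hc ⟨hc'.1.symm, hc'.2.symm⟩)]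
  have hJdiag : ∀ i, J i i = 0 := by intro i; simp [J]
  -- the local field
  have field : ∀ (S : Fin N → ℝ) (i : Fin N),
      (∑ j, J i j * S j) = M S (e.symm i).1 - S i := by
    intro S i
    have key : ∀ j : Fin N, J i j * S j
        = (if (e.symm i).1 = (e.symm j).1 then S j else 0) - (if j = i then S j else 0) := by
      intro j
      by_cases hj : j = i
      · subst hj; simp [J]
      · show (if _ then (1:ℝ) else 0) * S j = _
        by_cases hb : (e.symm i).1 = (e.symm j).1
        · rw [if_pos ⟨hb, Ne.symm hj⟩, if_pos hb, if_neg hj]; ring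
        · rw [if_neg (fun hc => hb hc.1), if_neg hb, if_neg hj]; ring
    rw [Finset.sum_congr rfl fun j _ => key j, Finset.sum_sub_distrib,
      Finset.sum_ite_eq' Finset.univ i]
    simp only [Finset.mem_univ, if_true]
    congr 1
    rw [← Equiv.sum_comp e (fun j => if (e.symm i).1 = (e.symm j).1 then S j else 0)]
    simp only [Equiv.symm_apply_apply]
    rw [Fintype.sum_prod_type]
    have inner : ∀ b : Fin m,
        (∑ x : Fin (d + 1), if (e.symm i).1 = (b, x).1 then S (e (b, x)) else 0)
        = if b = (e.symm i).1 then M S b else 0 := by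
      intro b
      by_cases hb : b = (e.symm i).1
      · subst hb; simp [M]
      · rw [if_neg hb]
        refine Finset.sum_eq_zero fun x _ => ?_
        rw [if_neg (fun hc => hb hc.symm)]
    rw [Finset.sum_congr rfl fun b _ => inner b, Finset.sum_ite_eq' Finset.univ]
    simp
  -- squares of spins
  have hsq : ∀ (S : Fin N → ℝ), IsAssignment S → ∀ i, S i * S i = 1 := by
    intro S hS i; rcases hS i with h|h <;> rw [h] <;> ring
  -- the energy formula
  have enform : ∀ (S : Fin N → ℝ), IsAssignment S →
      2 * energy 0 J S = (∑ b, M S b * M S b) - N := by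
    intro S hS
    have e1 : energy 0 J S = ∑ i, ∑ j, if i < j then J i j * S i * S j else 0 := by
      unfold energy; simp
    rw [e1, double_sum_lt (fun i j => J i j * S i * S j)
      (fun i j => by show J i j * S i * S j = J j i * S j * S i; rw [hJsymm]; ring)
      (fun i => by show J i i * S i * S i = 0; rw [hJdiag]; ring)]
    have e2 : ∀ i : Fin N, (∑ j, J i j * S i * S j) = S i * M S (e.symm i).1 - 1 := by
      intro i
      have : (∑ j, J i j * S i * S j) = S i * ∑ j, J i j * S j := by
        rw [Finset.mul_sum]
        exact Finset.sum_congr rfl fun j _ => by ring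
      rw [this, field S i, mul_sub, hsq S hS i]
    rw [Finset.sum_congr rfl fun i _ => e2 i, Finset.sum_sub_distrib]
    simp only [Finset.sum_const, Finset.card_univ, Fintype.card_fin, nsmul_eq_mul, mul_one]
    congr 1
    rw [← Equiv.sum_comp e (fun i => S i * M S (e.symm i).1)]
    simp only [Equiv.symm_apply_apply]
    rw [Fintype.sum_prod_type]
    refine Finset.sum_congr rfl fun b _ => ?_
    show (∑ y : Fin (d + 1), S (e (b, y)) * M S b) = M S b * M S b
    rw [← Finset.sum_mul]
  -- flip difference
  have flipdiff : ∀ (S : Fin N → ℝ), IsAssignment S → ∀ i,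
      energy 0 J (flipAt S i) = energy 0 J S + (2 - 2 * (S i * M S (e.symm i).1)) := by
    intro S hS i
    rw [flip_energy 0 J hJsymm hJdiag S i, field S i]
    have h1 := hsq S hS i
    simp only [Pi.zero_apply]
    linear_combination (2:ℝ) * h1
  -- characterization of local minima
  have locchar : ∀ S : Fin N → ℝ,
      IsingLocalMin 0 J S ↔ (IsAssignment S ∧ ∀ b, M S b = 0) := by
    intro S
    constructor
    · rintro ⟨hS, hloc⟩
      refine ⟨hS, fun b => ?_⟩
      have hcond : ∀ i, S i * M S (e.symm i).1 < 1 := by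
        intro i
        have := hloc i
        rw [flipdiff S hS i] at this
        linarith
      obtain ⟨z, hz⟩ : ∃ z : ℤ, M S b = (z : ℝ) := by
        refine ⟨∑ x : Fin (d + 1), if S (e (b, x)) = 1 then 1 else -1, ?_⟩
        push_cast
        refine Finset.sum_congr rfl fun x _ => ?_
        rcases hS (e (b, x)) with h|h
        · rw [h, if_neg (by norm_num : ¬(-1 : ℝ) = 1)]
        · rw [h, if_pos rfl]
      have hub : M S b < 1 := by
        by_cases hall : ∀ x : Fin (d + 1), S (e (b, x)) = -1
        · have : M S b = -(d + 1) := by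
            show (∑ x : Fin (d + 1), S (e (b, x))) = _
            rw [Finset.sum_congr rfl fun x _ => hall x]
            simp
          rw [this]
          have : (0:ℝ) < (d:ℝ) + 1 := by positivity
          linarith
        · push_neg at hall
          obtain ⟨x, hx⟩ := hall
          have hx1 : S (e (b, x)) = 1 := (hS _).resolve_left hx
          have hc := hcond (e (b, x))
          rw [Equiv.symm_apply_apply, hx1, one_mul] at hc
          exact hc
      have hlb : -1 < M S b := by
        by_cases hall : ∀ x : Fin (d + 1), S (e (b, x)) = 1
        · have : M S b = (d + 1) := by
            show (∑ x : Fin (d + 1), S (e (b, x))) = _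
            rw [Finset.sum_congr rfl fun x _ => hall x]
            simp
          rw [this]
          have : (0:ℝ) < (d:ℝ) + 1 := by positivity
          linarith
        · push_neg at hall
          obtain ⟨x, hx⟩ := hall
          have hx1 : S (e (b, x)) = -1 := (hS _).resolve_right hx
          have hc := hcond (e (b, x))
          rw [Equiv.symm_apply_apply, hx1] at hc
          linarith
      rw [hz] at hub hlb ⊢
      have h1 : z < 1 := by exact_mod_cast hub
      have h2 : -1 < z := by exact_mod_cast hlb
      have : z = 0 := by omega
      rw [this]; norm_num
    · rintro ⟨hS, hz⟩
      refine ⟨hS, fun i => ?_⟩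
      rw [flipdiff S hS i, hz]
      simp only [mul_zero, sub_zero]
      linarith
  -- local minima are global minima
  have glob : ∀ S : Fin N → ℝ, IsingLocalMin 0 J S → IsingGlobalMin 0 J S := by
    intro S hS
    rw [locchar] at hS
    obtain ⟨hS1, hS2⟩ := hS
    refine ⟨hS1, fun S' hS' => ?_⟩
    have h1 := enform S hS1
    have h2 := enform S' hS'
    have h3 : (∑ b, M S b * M S b) = 0 := by
      refine Finset.sum_eq_zero fun b _ => ?_
      rw [hS2 b]; ring
    have h4 : (0:ℝ) ≤ ∑ b, M S' b * M S' b :=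
      Finset.sum_nonneg fun b _ => mul_self_nonneg _
    rw [h3] at h1
    linarith
  -- degree bound
  have hdeg : ∀ i, degreeJ J i ≤ d := by
    intro i
    unfold degreeJ
    have hsub : {j | j ≠ i ∧ J i j ≠ 0}
        ⊆ (Set.range fun x : Fin (d + 1) => e ((e.symm i).1, x)) \ {i} := by
      rintro j ⟨hji, hJ0⟩
      have hc : (e.symm i).1 = (e.symm j).1 := by
        by_contra hc
        exact hJ0 (if_neg (fun hcc => hc hcc.1))
      refine ⟨⟨(e.symm j).2, ?_⟩, hji⟩
      rw [hc]
      simp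
    have hfin : ((Set.range fun x : Fin (d + 1) => e ((e.symm i).1, x)) \ {i}).Finite :=
      (Set.finite_range _).diff
    have hrange : (Set.range fun x : Fin (d + 1) => e ((e.symm i).1, x)).ncard = d + 1 := by
      have hinj : Function.Injective fun x : Fin (d + 1) => e ((e.symm i).1, x) := by
        intro a b hab
        have := e.injective hab
        exact (Prod.mk.injEq _ _ _ _).mp this |>.2
      rw [← Set.image_univ, Set.ncard_image_of_injective _ hinj, Set.ncard_univ,
        Nat.card_eq_fintype_card, Fintype.card_fin]
    have hmem : i ∈ Set.range fun x : Fin (d + 1) => e ((e.symm i).1, x) := ⟨(e.symm i).2, by simp⟩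
    calc {j | j ≠ i ∧ J i j ≠ 0}.ncard
        ≤ ((Set.range fun x : Fin (d + 1) => e ((e.symm i).1, x)) \ {i}).ncard :=
          Set.ncard_le_ncard hsub hfin
      _ = (Set.range fun x : Fin (d + 1) => e ((e.symm i).1, x)).ncard - 1 :=
          Set.ncard_diff_singleton_of_mem hmem
      _ = d := by rw [hrange]; omega
  -- counting
  have hcount : ((d + 1).choose ((d + 1) / 2)) ^ (N / (d + 1)) ≤
      Set.ncard {S : Fin N → ℝ | IsingLocalMin 0 J S} := by
    let A := Fin m → {s : Finset (Fin (d + 1)) // s.card = (d + 1) / 2}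
    let f : A → (Fin N → ℝ) := fun c i => if (e.symm i).2 ∈ (c (e.symm i).1).1 then 1 else -1
    have hinj : Function.Injective f := by
      intro c c' hcc
      funext b
      ext x
      have hthis := congrFun hcc (e (b, x))
      simp only [f, Equiv.symm_apply_apply] at hthis
      constructor
      · intro hx
        by_contra hx'
        rw [if_pos hx, if_neg hx'] at hthis
        norm_num at hthis
      · intro hx'
        by_contra hx
        rw [if_neg hx, if_pos hx'] at hthis
        norm_num at hthis
    have hmemf : ∀ c, IsingLocalMin 0 J (f c) := by
      intro c
      rw [locchar]
      refine ⟨fun i => ?_, fun b => ?_⟩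
      · by_cases hx : (e.symm i).2 ∈ (c (e.symm i).1).1
        · right; simp [f, hx]
        · left; simp [f, hx]
      · have step1 : M (f c) b = ∑ x : Fin (d + 1), (if x ∈ (c b).1 then (1:ℝ) else -1) := by
          refine Finset.sum_congr rfl fun x _ => ?_
          simp [f]
        have step2 : ∀ x : Fin (d + 1), (if x ∈ (c b).1 then (1:ℝ) else -1)
            = (if x ∈ (c b).1 then (2:ℝ) else 0) - 1 := by
          intro x; split_ifs <;> norm_num
        rw [step1, Finset.sum_congr rfl fun x _ => step2 x, Finset.sum_sub_distrib]
        rw [Finset.sum_ite_mem, Finset.univ_inter, Finset.sum_const]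
        simp only [Finset.sum_const, Finset.card_univ, Fintype.card_fin, nsmul_eq_mul, mul_one]
        rw [(c b).2]
        have h2 : ((d + 1) / 2) * 2 = d + 1 := Nat.div_mul_cancel hde.two_dvd
        have : (((d + 1) / 2 : ℕ) : ℝ) * 2 = ((d + 1 : ℕ) : ℝ) := by exact_mod_cast congrArg (Nat.cast : ℕ → ℝ) h2
        push_cast at this ⊢
        linarith
    have hsubset : Set.range f ⊆ {S : Fin N → ℝ | IsingLocalMin 0 J S} := by
      rintro _ ⟨c, rfl⟩
      exact hmemf c
    have hfinloc : {S : Fin N → ℝ | IsingLocalMin 0 J S}.Finite := by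
      refine Set.Finite.subset
        (Set.Finite.pi (fun _ : Fin N => ((Set.finite_singleton (1:ℝ)).insert (-1)))) ?_
      intro S hS
      rw [Set.mem_pi]
      intro i _
      rcases hS.1 i with h|h <;> simp [h]
    have hcardA : Fintype.card A = ((d + 1).choose ((d + 1) / 2)) ^ m := by
      rw [Fintype.card_fun]
      congr 1
      · simp [Fintype.card_finset_len]
      · exact Fintype.card_fin m
    calc ((d + 1).choose ((d + 1) / 2)) ^ (N / (d + 1))
        = Fintype.card A := by rw [hmN, hcardA]
      _ = (Set.range f).ncard := by
          rw [← Set.image_univ, Set.ncard_image_of_injective _ hinj, Set.ncard_univ,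
            Nat.card_eq_fintype_card]
      _ ≤ Set.ncard {S : Fin N → ℝ | IsingLocalMin 0 J S} :=
          Set.ncard_le_ncard hsubset hfinloc
  exact ⟨0, J, hJsymm, hJdiag, hdeg, hcount, glob⟩
end

section
/- There exists a constant c > 0 such that for every integer f ≥ 1 and every even integer l ≥ 2, there is a choice of integers M_C, one for each column C, such that the number of zero-energy assignments (assignments S : {1,…,l}^f → {−1,+1} with ∑_{i ∈ C} S i = M_C for every column C) is at least 2^N · (c/(f·√l))^{n_C}, where N = l^f and n_C = f·l^{f−1}. -/
open Finset

/-- The sum of `S` along the column through `y` in direction `b`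
(the column consists of the points `Function.update y b x` for `x : Fin l`;
this sum does not depend on the value `y b`). -/
def colSum (f l : ℕ) (S : (Fin f → Fin l) → ℤ) (b : Fin f) (y : Fin f → Fin l) : ℤ :=
  ∑ x : Fin l, S (Function.update y b x)

namespace Stmt5

set_option linter.unusedSectionVars false

lemma sum_zpow_Icc (z : ℂ) (hz0 : z ≠ 0) (m : ℕ) (a : ℤ) :
    ∑ j ∈ Finset.Icc a (a + m - 1), z ^ j = z ^ a * ∑ i ∈ Finset.range m, z ^ i := by
  rw [Finset.mul_sum]
  refine Finset.sum_nbij' (fun j => (j - a).toNat) (fun i => a + i) ?_ ?_ ?_ ?_ ?_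
  · intro j hj
    simp only [Finset.mem_Icc] at hj
    simp only [Finset.mem_range]
    omega
  · intro i hi
    simp only [Finset.mem_range] at hi
    simp only [Finset.mem_Icc]
    omega
  · intro j hj
    simp only [Finset.mem_Icc] at hj
    show a + ((j - a).toNat : ℤ) = j
    omega
  · intro i hi
    simp only [Finset.mem_range] at hi
    show (a + (i:ℤ) - a).toNat = i
    omega
  · intro j hj
    simp only [Finset.mem_Icc] at hj
    rw [← zpow_natCast z ((j - a).toNat), ← zpow_add₀ hz0]
    congr 1
    omega

lemma orth (m : ℕ) (hm : 0 < m) (d : ℤ) (hd : |d| < m) (a : ℤ) :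
    ∑ j ∈ Finset.Icc a (a + m - 1), Complex.exp (2 * Real.pi * Complex.I * d / m) ^ j
      = if d = 0 then (m : ℂ) else 0 := by
  set z := Complex.exp (2 * Real.pi * Complex.I * d / m) with hz
  have hz0 : z ≠ 0 := Complex.exp_ne_zero _
  rcases eq_or_ne d 0 with rfl | hd0
  · simp only [if_pos rfl]
    have : z = 1 := by rw [hz]; norm_num
    rw [this]
    simp only [one_zpow, Finset.sum_const, nsmul_eq_mul, mul_one]
    rw [Int.card_Icc]
    congr 1
    omega
  · rw [if_neg hd0]
    have hmne : (m : ℂ) ≠ 0 := by exact_mod_cast hm.ne'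
    have hzm : z ^ m = 1 := by
      rw [hz, ← Complex.exp_nat_mul]
      have : (m : ℂ) * (2 * Real.pi * Complex.I * d / m) = d * (2 * Real.pi * Complex.I) := by
        field_simp
      rw [this, Complex.exp_int_mul_two_pi_mul_I]
    have hz1 : z ≠ 1 := by
      intro h
      rw [hz, Complex.exp_eq_one_iff] at h
      obtain ⟨n, hn⟩ := h
      have h2 : (2 * Real.pi * Complex.I) ≠ 0 := by
        simp [Real.pi_ne_zero, Complex.I_ne_zero, Complex.ofReal_ne_zero]
      have hc : (2 * (Real.pi:ℂ) * Complex.I) * d = (2 * Real.pi * Complex.I) * (n * m) := by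
        field_simp at hn
        linear_combination (2 * (Real.pi:ℂ) * Complex.I) * hn
      have hdc : (d : ℂ) = (n * m : ℤ) := by
        push_cast
        exact mul_left_cancel₀ h2 hc
      have hnm : d = n * m := by exact_mod_cast hdc
      rcases eq_or_ne n 0 with rfl | hn0
      · rw [hnm] at hd0; simp at hd0
      · have hge : (m:ℤ) ≤ |d| := by
          rw [hnm, abs_mul, Int.abs_natCast]
          calc (m:ℤ) = 1 * m := (one_mul _).symm
          _ ≤ |n| * m := by
              exact mul_le_mul_of_nonneg_right (Int.one_le_abs (by omega)) (by positivity)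
        omega
    rw [sum_zpow_Icc z hz0 m a, geom_sum_eq hz1, hzm]
    simp

lemma exp_le_cos_sq (x : ℝ) (hx : x^2 ≤ 1/2) : Real.exp (-(2*x^2)) ≤ Real.cos x ^ 2 := by
  have h1 : 1 - x^2/2 ≤ Real.cos x := Real.one_sub_sq_div_two_le_cos
  have h2 : 1 + 2*x^2 ≤ Real.exp (2*x^2) := by
    have := Real.add_one_le_exp (2*x^2); linarith
  have hpos : (0:ℝ) < 1 + 2*x^2 := by positivity
  have h4 : Real.exp (-(2*x^2)) ≤ (1+2*x^2)⁻¹ := by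
    rw [Real.exp_neg]
    exact inv_anti₀ hpos h2
  have h5 : (1+2*x^2)⁻¹ ≤ 1 - x^2 := by
    rw [inv_le_iff_one_le_mul₀ hpos]
    nlinarith
  nlinarith

variable (f l : ℕ)

def sgn (S : (Fin f → Fin l) → Bool) (p : Fin f → Fin l) : ℤ := if S p then 1 else -1

section
variable [NeZero l]

abbrev Col := (b : Fin f) × {y : Fin f → Fin l // y b = 0}

def rp (b : Fin f) (p : Fin f → Fin l) : {y : Fin f → Fin l // y b = 0} :=
  ⟨Function.update p b 0, by simp⟩

def colOf (b : Fin f) (p : Fin f → Fin l) : Col f l := ⟨b, rp f l b p⟩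

def X (S : (Fin f → Fin l) → ℤ) (k : Col f l) : ℤ := colSum f l S k.1 k.2.1

def tau (J : Col f l → ℤ) (p : Fin f → Fin l) : ℤ := ∑ b, J (colOf f l b p)

lemma rp_update (b : Fin f) (y : {y : Fin f → Fin l // y b = 0}) (x : Fin l) :
    rp f l b (Function.update y.1 b x) = y := by
  obtain ⟨y, hy⟩ := y
  apply Subtype.ext
  simp only [rp, Function.update_idem]
  conv_lhs => rw [← hy]
  exact Function.update_eq_self b y

def colEquiv (b : Fin f) : ({y : Fin f → Fin l // y b = 0} × Fin l) ≃ (Fin f → Fin l) where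
  toFun q := Function.update q.1.1 b q.2
  invFun p := (rp f l b p, p b)
  left_inv := by
    rintro ⟨y, x⟩
    ext1
    · exact rp_update f l b y x
    · simp
  right_inv := by
    intro p
    simp only [rp, Function.update_idem]
    exact Function.update_eq_self b p

lemma sum_rp {M : Type*} [AddCommMonoid M] (b : Fin f) (g : {y : Fin f → Fin l // y b = 0} → M) :
    ∑ p : Fin f → Fin l, g (rp f l b p) = l • ∑ y, g y := by
  rw [← Fintype.sum_equiv (colEquiv f l b) (fun q => g q.1) (fun p => g (rp f l b p))
    (fun q => by
      show g q.1 = g (rp f l b (Function.update q.1.1 b q.2))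
      rw [rp_update f l b q.1 q.2])]
  rw [Fintype.sum_prod_type]
  simp [Finset.smul_sum]

lemma sum_J_X (J : Col f l → ℤ) (S : (Fin f → Fin l) → ℤ) :
    ∑ k : Col f l, J k * X f l S k = ∑ p, tau f l J p * S p := by
  have h1 : ∑ k : Col f l, J k * X f l S k
      = ∑ b : Fin f, ∑ y : {y : Fin f → Fin l // y b = 0}, ∑ x : Fin l,
        J ⟨b, y⟩ * S (Function.update y.1 b x) := by
    have := Finset.sum_sigma (Finset.univ : Finset (Fin f))
      (fun b => (Finset.univ : Finset {y : Fin f → Fin l // y b = 0}))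
      (fun k : Col f l => J k * X f l S k)
    rw [show (Finset.univ : Finset (Fin f)).sigma (fun _ => Finset.univ)
        = (Finset.univ : Finset (Col f l)) by ext k; simp] at this
    rw [this]
    exact Fintype.sum_congr _ _ fun b => Fintype.sum_congr _ _ fun y => by
      rw [X, colSum, Finset.mul_sum]
  rw [h1]
  have h2 : ∀ b : Fin f, ∑ y : {y : Fin f → Fin l // y b = 0}, ∑ x : Fin l,
      J ⟨b, y⟩ * S (Function.update y.1 b x) = ∑ p, J (colOf f l b p) * S p := by
    intro b
    have hp : ∑ y : {y : Fin f → Fin l // y b = 0}, ∑ x : Fin l,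
        J ⟨b, y⟩ * S (Function.update y.1 b x)
        = ∑ q : {y : Fin f → Fin l // y b = 0} × Fin l,
            J ⟨b, q.1⟩ * S (Function.update q.1.1 b q.2) :=
      (Fintype.sum_prod_type' _).symm
    rw [hp]
    exact Fintype.sum_equiv (colEquiv f l b) _ _
      (fun q => by
        show J ⟨b, q.1⟩ * S (Function.update q.1.1 b q.2)
            = J (colOf f l b (Function.update q.1.1 b q.2)) * S (Function.update q.1.1 b q.2)
        rw [colOf, rp_update f l b q.1 q.2])
  simp_rw [h2]
  rw [Finset.sum_comm]
  exact Fintype.sum_congr _ _ fun p => by rw [tau, Finset.sum_mul]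


lemma abs_sgn (S : (Fin f → Fin l) → Bool) (p : Fin f → Fin l) : |sgn f l S p| = 1 := by
  unfold sgn; split <;> simp

lemma absX (S : (Fin f → Fin l) → Bool) (k : Col f l) : |X f l (sgn f l S) k| ≤ l := by
  rw [X, colSum]
  refine le_trans (Finset.abs_sum_le_sum_abs _ _) ?_
  rw [Finset.sum_congr rfl (fun x _ => abs_sgn f l S (Function.update k.2.1 k.1 x))]
  simp

lemma orth' (hl : 0 < l) (d : ℤ) (hd : |d| ≤ 2*l) :
    (if d = 0 then (1:ℂ) else 0)
      = ((8*l:ℝ):ℂ)⁻¹ * ∑ j ∈ Finset.Icc (-(4*l:ℤ)) (4*l-1),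
          Complex.exp (((j * d : ℤ) : ℂ) * (((2*Real.pi/(8*l) : ℝ)) : ℂ) * Complex.I) := by
  have h8 : ((8*l : ℕ) : ℂ) = ((8*l:ℝ):ℂ) := by push_cast; ring
  have key : ∑ j ∈ Finset.Icc (-(4*l:ℤ)) (4*l-1),
      Complex.exp (((j * d : ℤ) : ℂ) * (((2*Real.pi/(8*l) : ℝ)) : ℂ) * Complex.I)
      = if d = 0 then ((8*l:ℕ) : ℂ) else 0 := by
    have horth := orth (8*l) (by omega) d (by push_cast; omega) (-(4*l:ℤ))
    have ha : (-(4*l:ℤ) + (8*l:ℕ) - 1) = 4*l - 1 := by push_cast; ring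
    rw [ha] at horth
    rw [← horth]
    refine Finset.sum_congr rfl fun j _ => ?_
    rw [← Complex.exp_int_mul]
    congr 1
    push_cast
    field_simp
  rw [key, h8]
  have hne : ((8*l:ℝ):ℂ) ≠ 0 := by
    simp only [ne_eq, Complex.ofReal_eq_zero]
    positivity
  split
  · rw [inv_mul_cancel₀ hne]
  · rw [mul_zero]


lemma fact (J : Col f l → ℤ) (θ : ℝ) :
    ∑ S : (Fin f → Fin l) → Bool,
        Complex.exp (((∑ k : Col f l, J k * X f l (sgn f l S) k : ℤ) : ℂ) * (θ * Complex.I))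
      = ∏ p : Fin f → Fin l, ((2 * Real.cos (θ * (tau f l J p : ℝ)) : ℝ) : ℂ) := by
  have h1 : ∀ S : (Fin f → Fin l) → Bool,
      Complex.exp (((∑ k : Col f l, J k * X f l (sgn f l S) k : ℤ) : ℂ) * (θ * Complex.I))
        = ∏ p : Fin f → Fin l,
            Complex.exp (((tau f l J p * sgn f l S p : ℤ) : ℂ) * (θ * Complex.I)) := by
    intro S
    rw [sum_J_X, ← Complex.exp_sum]
    congr 1
    rw [← Finset.sum_mul]
    congr 1
    push_cast
    rfl
  simp_rw [h1]
  have h2 : ∀ (g : (Fin f → Fin l) → Bool → ℂ),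
      ∑ S : (Fin f → Fin l) → Bool, ∏ p, g p (S p) = ∏ p, (g p true + g p false) := by
    intro g
    rw [← Fintype.piFinset_univ, Finset.sum_prod_piFinset]
    exact Fintype.prod_congr _ _ fun p => by rw [Fintype.sum_bool]
  simp only [sgn]
  rw [h2 (fun p v => Complex.exp (((tau f l J p * (if v = true then 1 else -1) : ℤ) : ℂ) * (θ * Complex.I)))]
  refine Fintype.prod_congr _ _ fun p => ?_
  have e1 : Complex.exp (((tau f l J p * (if true = true then 1 else -1) : ℤ) : ℂ) * (θ * Complex.I))
      = Complex.exp (((θ * (tau f l J p : ℝ) : ℝ) : ℂ) * Complex.I) := by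
    congr 1; simp only [if_pos rfl]; push_cast; ring
  have e2 : Complex.exp (((tau f l J p * (if false = true then 1 else -1) : ℤ) : ℂ) * (θ * Complex.I))
      = Complex.exp (-(((θ * (tau f l J p : ℝ) : ℝ) : ℂ)) * Complex.I) := by
    congr 1
    simp only [if_neg (by simp : ¬ false = true)]
    push_cast
    ring
  rw [e1, e2, ← Complex.two_cos]
  push_cast [Complex.ofReal_cos]
  ring


lemma mainid (hl : 0 < l) :
    ((Finset.univ.filter (fun SS : ((Fin f → Fin l) → Bool) × ((Fin f → Fin l) → Bool) =>
        ∀ k : Col f l, X f l (sgn f l SS.1) k = X f l (sgn f l SS.2) k)).card : ℝ)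
      = (8*l:ℝ)⁻¹ ^ (Fintype.card (Col f l)) *
          ∑ J ∈ Fintype.piFinset (fun _ : Col f l => Finset.Icc (-(4*l:ℤ)) (4*l-1)),
            (∏ p : Fin f → Fin l, 2 * Real.cos ((2*Real.pi/(8*l)) * (tau f l J p : ℝ)))^2 := by
  apply Complex.ofReal_inj.mp
  have key : ∀ SS : ((Fin f → Fin l) → Bool) × ((Fin f → Fin l) → Bool),
      (if (∀ k : Col f l, X f l (sgn f l SS.1) k = X f l (sgn f l SS.2) k) then (1:ℂ) else 0)
        = ((8*l:ℝ):ℂ)⁻¹ ^ (Fintype.card (Col f l)) *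
            ∑ J ∈ Fintype.piFinset (fun _ : Col f l => Finset.Icc (-(4*l:ℤ)) (4*l-1)),
              ∏ k : Col f l,
                Complex.exp (((J k * (X f l (sgn f l SS.1) k - X f l (sgn f l SS.2) k) : ℤ) : ℂ)
                  * (((2*Real.pi/(8*l) : ℝ)) : ℂ) * Complex.I) := by
    intro SS
    have e1 : (if (∀ k : Col f l, X f l (sgn f l SS.1) k = X f l (sgn f l SS.2) k)
          then (1:ℂ) else 0)
        = ∏ k : Col f l, if X f l (sgn f l SS.1) k = X f l (sgn f l SS.2) k
            then (1:ℂ) else 0 := by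
      rw [Finset.prod_boole]
      simp
    rw [e1]
    have e2 : ∀ k : Col f l, (if X f l (sgn f l SS.1) k = X f l (sgn f l SS.2) k
          then (1:ℂ) else 0)
        = ((8*l:ℝ):ℂ)⁻¹ * ∑ j ∈ Finset.Icc (-(4*l:ℤ)) (4*l-1),
            Complex.exp (((j * (X f l (sgn f l SS.1) k - X f l (sgn f l SS.2) k) : ℤ) : ℂ)
              * (((2*Real.pi/(8*l) : ℝ)) : ℂ) * Complex.I) := by
      intro k
      have hd : |X f l (sgn f l SS.1) k - X f l (sgn f l SS.2) k| ≤ 2*l := by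
        have h1 := absX f l SS.1 k
        have h2 := absX f l SS.2 k
        rw [abs_le] at h1 h2 ⊢
        omega
      have h := orth' l hl _ hd
      rw [show (if X f l (sgn f l SS.1) k = X f l (sgn f l SS.2) k then (1:ℂ) else 0)
          = (if X f l (sgn f l SS.1) k - X f l (sgn f l SS.2) k = 0 then (1:ℂ) else 0) by
        simp [sub_eq_zero], h]
    rw [Finset.prod_congr rfl (fun k _ => e2 k), Finset.prod_mul_distrib,
      Finset.prod_const, Finset.card_univ, Finset.prod_univ_sum]
  have step1 : ((((Finset.univ.filter (fun SS : ((Fin f → Fin l) → Bool) × ((Fin f → Fin l) → Bool) =>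
        ∀ k : Col f l, X f l (sgn f l SS.1) k = X f l (sgn f l SS.2) k)).card : ℝ)) : ℂ)
      = ∑ SS : ((Fin f → Fin l) → Bool) × ((Fin f → Fin l) → Bool),
          (if (∀ k : Col f l, X f l (sgn f l SS.1) k = X f l (sgn f l SS.2) k)
            then (1:ℂ) else 0) := by
    rw [Finset.sum_boole]
    norm_num
  rw [step1, Finset.sum_congr rfl (fun SS _ => key SS), ← Finset.mul_sum, Finset.sum_comm]
  have inner : ∀ J ∈ Fintype.piFinset (fun _ : Col f l => Finset.Icc (-(4*l:ℤ)) (4*l-1)),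
      (∑ SS : ((Fin f → Fin l) → Bool) × ((Fin f → Fin l) → Bool),
        ∏ k : Col f l,
          Complex.exp (((J k * (X f l (sgn f l SS.1) k - X f l (sgn f l SS.2) k) : ℤ) : ℂ)
            * (((2*Real.pi/(8*l) : ℝ)) : ℂ) * Complex.I))
      = (((∏ p : Fin f → Fin l, 2 * Real.cos ((2*Real.pi/(8*l)) * (tau f l J p : ℝ)))^2 : ℝ) : ℂ) := by
    intro J _
    have split : ∀ SS : ((Fin f → Fin l) → Bool) × ((Fin f → Fin l) → Bool),
        (∏ k : Col f l,
          Complex.exp (((J k * (X f l (sgn f l SS.1) k - X f l (sgn f l SS.2) k) : ℤ) : ℂ)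
            * (((2*Real.pi/(8*l) : ℝ)) : ℂ) * Complex.I))
        = Complex.exp (((∑ k : Col f l, J k * X f l (sgn f l SS.1) k : ℤ) : ℂ)
              * (((2*Real.pi/(8*l) : ℝ) : ℂ) * Complex.I))
          * Complex.exp (((∑ k : Col f l, J k * X f l (sgn f l SS.2) k : ℤ) : ℂ)
              * (((-(2*Real.pi/(8*l)) : ℝ) : ℂ) * Complex.I)) := by
      intro SS
      rw [← Complex.exp_sum, ← Complex.exp_add]
      congr 1
      have hterm : ∀ k : Col f l,
          ((J k * (X f l (sgn f l SS.1) k - X f l (sgn f l SS.2) k) : ℤ) : ℂ)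
              * (((2*Real.pi/(8*l) : ℝ)) : ℂ) * Complex.I
            = ((J k * X f l (sgn f l SS.1) k : ℤ) : ℂ) * (((2*Real.pi/(8*l) : ℝ) : ℂ) * Complex.I)
              + ((J k * X f l (sgn f l SS.2) k : ℤ) : ℂ)
                  * (((-(2*Real.pi/(8*l)) : ℝ) : ℂ) * Complex.I) := by
        intro k
        push_cast
        ring
      rw [Finset.sum_congr rfl (fun k _ => hterm k), Finset.sum_add_distrib,
        ← Finset.sum_mul, ← Finset.sum_mul]
      congr 2 <;> push_cast <;> ring
    have hpf := Fintype.sum_mul_sum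
      (fun S : (Fin f → Fin l) → Bool => Complex.exp (((∑ k : Col f l, J k * X f l (sgn f l S) k : ℤ) : ℂ)
          * (((2*Real.pi/(8*l) : ℝ) : ℂ) * Complex.I)))
      (fun S : (Fin f → Fin l) → Bool => Complex.exp (((∑ k : Col f l, J k * X f l (sgn f l S) k : ℤ) : ℂ)
          * (((-(2*Real.pi/(8*l)) : ℝ) : ℂ) * Complex.I)))
    rw [Finset.sum_congr rfl (fun SS _ => split SS), Fintype.sum_prod_type, ← hpf]
    rw [fact f l J (2*Real.pi/(8*l)), fact f l J (-(2*Real.pi/(8*l)))]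
    simp only [neg_mul, Real.cos_neg]
    rw [← Complex.ofReal_prod]
    push_cast
    ring
  rw [Finset.sum_congr rfl inner]
  push_cast
  ring

lemma card_sub (hl : 0 < l) (b : Fin f) :
    Fintype.card {y : Fin f → Fin l // y b = 0} = l^(f-1) := by
  have h := Fintype.card_congr (colEquiv f l b).symm
  simp only [Fintype.card_prod, Fintype.card_fin, Fintype.card_fun] at h
  have hb : 0 < f := b.pos
  have hfl : l ^ f = l^(f-1) * l := by rw [← pow_succ, Nat.sub_add_cancel hb]
  rw [hfl] at h
  exact (Nat.eq_of_mul_eq_mul_right hl h.symm)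

lemma card_Col (hl : 0 < l) : Fintype.card (Col f l) = f * l^(f-1) := by
  rw [Fintype.card_sigma]
  rw [Finset.sum_congr rfl (fun b _ => card_sub f l hl b)]
  simp [mul_comm]

lemma sum_sq_swap (J : Col f l → ℤ) :
    ∑ p : Fin f → Fin l, ∑ b : Fin f, ((J (colOf f l b p) : ℝ))^2
      = l * ∑ k : Col f l, ((J k : ℝ))^2 := by
  rw [Finset.sum_comm]
  have hb : ∀ b : Fin f, ∑ p : Fin f → Fin l, ((J (colOf f l b p) : ℝ))^2
      = l * ∑ y : {y : Fin f → Fin l // y b = 0}, ((J ⟨b, y⟩ : ℝ))^2 := by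
    intro b
    have := sum_rp f l b (fun y => ((J ⟨b, y⟩ : ℝ))^2)
    simpa [nsmul_eq_mul, colOf] using this
  rw [Finset.sum_congr rfl (fun b _ => hb b), ← Finset.mul_sum]
  congr 1
  have h := Finset.sum_sigma (Finset.univ : Finset (Fin f))
    (fun b => (Finset.univ : Finset {y : Fin f → Fin l // y b = 0}))
    (fun k : Col f l => ((J k : ℝ))^2)
  rw [show (Finset.univ : Finset (Fin f)).sigma (fun _ => Finset.univ)
      = (Finset.univ : Finset (Col f l)) by ext k; simp] at h
  rw [h]

lemma estimate (hf : 1 ≤ f) (hl : 2 ≤ l) (K : ℕ)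
    (hccK : (2*Real.pi/(8*l)) * K ≤ 1/(f*Real.sqrt l))
    (J : Col f l → ℤ) (hJ : ∀ k : Col f l, |(J k : ℝ)| ≤ K) :
    (4:ℝ)^(l^f) * Real.exp (-(2 * ((f * l^(f-1) : ℕ) : ℝ)))
      ≤ (∏ p : Fin f → Fin l, 2 * Real.cos ((2*Real.pi/(8*l)) * (tau f l J p : ℝ)))^2 := by
  push_cast
  have hl0 : (0:ℝ) < l := by positivity
  have hsl : (0:ℝ) < Real.sqrt l := Real.sqrt_pos.mpr hl0
  have hf0 : (0:ℝ) < f := by exact_mod_cast hf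
  have hcc0 : (0:ℝ) ≤ 2*Real.pi/(8*l) := by positivity
  set cc : ℝ := 2*Real.pi/(8*l) with hcc
  -- bound on each |cc * tau|
  have htau : ∀ p : Fin f → Fin l, |cc * (tau f l J p : ℝ)| ≤ 1 / Real.sqrt l := by
    intro p
    have h1 : |(tau f l J p : ℝ)| ≤ f * K := by
      rw [tau]
      push_cast
      refine le_trans (Finset.abs_sum_le_sum_abs _ _) ?_
      calc ∑ b : Fin f, |(J (colOf f l b p) : ℝ)| ≤ ∑ _b : Fin f, (K:ℝ) :=
            Finset.sum_le_sum (fun b _ => hJ _)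
      _ = f * K := by simp [mul_comm]
    rw [abs_mul, abs_of_nonneg hcc0]
    calc cc * |(tau f l J p : ℝ)| ≤ cc * (f * K) := by
          exact mul_le_mul_of_nonneg_left h1 hcc0
    _ = f * (cc * K) := by ring
    _ ≤ f * (1/(f*Real.sqrt l)) := mul_le_mul_of_nonneg_left hccK (le_of_lt hf0)
    _ = 1 / Real.sqrt l := by field_simp
  have hsq : ∀ p : Fin f → Fin l, (cc * (tau f l J p : ℝ))^2 ≤ 1/2 := by
    intro p
    have h2 : (cc * (tau f l J p : ℝ))^2 ≤ (1/Real.sqrt l)^2 := by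
      rw [sq_abs (cc * _) |>.symm]
      exact pow_le_pow_left₀ (abs_nonneg _) (htau p) 2
    refine le_trans h2 ?_
    rw [div_pow, one_pow, Real.sq_sqrt (le_of_lt hl0)]
    have hl2 : (2:ℝ) ≤ l := by exact_mod_cast hl
    rw [div_le_div_iff₀ hl0 (by norm_num)]
    linarith
  -- sum of squares bound
  have hsum : ∑ p : Fin f → Fin l, (cc * (tau f l J p : ℝ))^2 ≤ (f * l^(f-1) : ℝ) := by
    have e1 : ∀ p, (cc * (tau f l J p : ℝ))^2 = cc^2 * ((tau f l J p : ℝ))^2 := by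
      intro p; ring
    rw [Finset.sum_congr rfl (fun p _ => e1 p), ← Finset.mul_sum]
    have e2 : ∑ p : Fin f → Fin l, ((tau f l J p : ℝ))^2
        ≤ f * (l * ∑ k : Col f l, ((J k : ℝ))^2) := by
      have e3 : ∀ p, ((tau f l J p : ℝ))^2 ≤ f * ∑ b : Fin f, ((J (colOf f l b p) : ℝ))^2 := by
        intro p
        have : ((tau f l J p : ℝ)) = ∑ b : Fin f, ((J (colOf f l b p) : ℝ)) := by
          rw [tau]; push_cast; rfl
        rw [this]
        have := sq_sum_le_card_mul_sum_sq
          (s := (Finset.univ : Finset (Fin f))) (f := fun b => ((J (colOf f l b p) : ℝ)))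
        simpa using this
      refine le_trans (Finset.sum_le_sum (fun p _ => e3 p)) ?_
      rw [← Finset.mul_sum, sum_sq_swap]
    have e4 : ∑ k : Col f l, ((J k : ℝ))^2 ≤ (f * l^(f-1) : ℝ) * K^2 := by
      calc ∑ k : Col f l, ((J k : ℝ))^2 ≤ ∑ _k : Col f l, (K:ℝ)^2 := by
            refine Finset.sum_le_sum (fun k _ => ?_)
            rw [← sq_abs]
            exact pow_le_pow_left₀ (abs_nonneg _) (hJ k) 2
      _ = (f * l^(f-1) : ℝ) * K^2 := by
          rw [Finset.sum_const, Finset.card_univ, card_Col f l (by omega)]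
          push_cast
          ring
    calc cc^2 * ∑ p : Fin f → Fin l, ((tau f l J p : ℝ))^2
        ≤ cc^2 * (f * (l * ((f * l^(f-1) : ℝ) * K^2))) := by
          refine mul_le_mul_of_nonneg_left ?_ (by positivity)
          refine le_trans e2 ?_
          refine mul_le_mul_of_nonneg_left ?_ (le_of_lt hf0)
          exact mul_le_mul_of_nonneg_left e4 (le_of_lt hl0)
    _ = (f * l^(f-1) : ℝ) * (f * l * (cc*K)^2) := by ring
    _ ≤ (f * l^(f-1) : ℝ) * (f * l * (1/(f*Real.sqrt l))^2) := by
          refine mul_le_mul_of_nonneg_left ?_ (by positivity)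
          refine mul_le_mul_of_nonneg_left ?_ (by positivity)
          refine pow_le_pow_left₀ (by positivity) hccK 2
    _ = (f * l^(f-1) : ℝ) * (f * l * (1/(f^2 * l))) := by
          rw [div_pow, one_pow, mul_pow, Real.sq_sqrt (le_of_lt hl0)]
    _ = (f * l^(f-1) : ℝ) * (1/f) := by field_simp
    _ ≤ (f * l^(f-1) : ℝ) * 1 := by
          refine mul_le_mul_of_nonneg_left ?_ (by positivity)
          rw [div_le_one hf0]
          exact_mod_cast hf
    _ = (f * l^(f-1) : ℝ) := by ring
  -- put it together
  rw [← Finset.prod_pow]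
  have hterm : ∀ p : Fin f → Fin l,
      4 * Real.exp (-(2 * (cc * (tau f l J p : ℝ))^2))
        ≤ (2 * Real.cos (cc * (tau f l J p : ℝ)))^2 := by
    intro p
    have := exp_le_cos_sq (cc * (tau f l J p : ℝ)) (hsq p)
    calc 4 * Real.exp (-(2 * (cc * (tau f l J p : ℝ))^2))
        ≤ 4 * Real.cos (cc * (tau f l J p : ℝ))^2 := by linarith
    _ = (2 * Real.cos (cc * (tau f l J p : ℝ)))^2 := by ring
  have hprod : ∏ p : Fin f → Fin l, (4 * Real.exp (-(2 * (cc * (tau f l J p : ℝ))^2)))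
      ≤ ∏ p : Fin f → Fin l, (2 * Real.cos (cc * (tau f l J p : ℝ)))^2 :=
    Finset.prod_le_prod (fun p _ => by positivity) (fun p _ => hterm p)
  refine le_trans ?_ hprod
  rw [Finset.prod_mul_distrib, Finset.prod_const, ← Real.exp_sum, Finset.card_univ]
  have hcard : Fintype.card (Fin f → Fin l) = l ^ f := by
    simp [Fintype.card_fun]
  rw [hcard]
  refine mul_le_mul_of_nonneg_left ?_ (by positivity)
  rw [Real.exp_le_exp]
  have hneg : ∑ p : Fin f → Fin l, -(2 * (cc * (tau f l J p : ℝ))^2)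
      = -(2 * ∑ p : Fin f → Fin l, (cc * (tau f l J p : ℝ))^2) := by
    simp [Finset.mul_sum]
  rw [hneg]
  have h2 : (0:ℝ) ≤ 2 := by norm_num
  refine neg_le_neg ?_
  exact mul_le_mul_of_nonneg_left hsum h2


lemma core (hf : 1 ≤ f) (hl : 2 ≤ l) :
    ∃ S₀ : (Fin f → Fin l) → Bool,
      (2:ℝ)^(l^f) * (Real.exp (-2) / (2*Real.pi) / (f * Real.sqrt l))^(f * l^(f-1)) ≤
        ((Finset.univ.filter fun S : (Fin f → Fin l) → Bool =>
            ∀ k : Col f l, X f l (sgn f l S) k = X f l (sgn f l S₀) k).card : ℝ) := by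
  have hl0 : (0:ℝ) < l := by positivity
  have hl0' : 0 < l := by omega
  have hf0 : (0:ℝ) < f := by exact_mod_cast hf
  have hsl : (0:ℝ) < Real.sqrt l := Real.sqrt_pos.mpr hl0
  have hsl1 : (1:ℝ) ≤ Real.sqrt l := by
    rw [show (1:ℝ) = Real.sqrt 1 by simp]
    exact Real.sqrt_le_sqrt (by exact_mod_cast (by omega : 1 ≤ l))
  have hpi := Real.pi_gt_three
  set r : ℝ := (8*l)/(2*Real.pi*(f*Real.sqrt l)) with hr
  have hr0 : 0 ≤ r := by positivity
  set K : ℕ := ⌊r⌋₊ with hKdef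
  -- basic K facts
  have hKler : (K:ℝ) ≤ r := Nat.floor_le hr0
  have hrlt : r < K + 1 := Nat.lt_floor_add_one r
  have hccK : (2*Real.pi/(8*l)) * K ≤ 1/(f*Real.sqrt l) := by
    have heq : (2*Real.pi/(8*l)) * r = 1/(f*Real.sqrt l) := by
      rw [hr]
      field_simp
    rw [← heq]
    exact mul_le_mul_of_nonneg_left hKler (by positivity)
  have hr43 : r ≤ 4*l/3 := by
    rw [hr, div_le_div_iff₀ (by positivity) (by norm_num)]
    have h1 : (1:ℝ) ≤ f * Real.sqrt l := by
      calc (1:ℝ) = 1 * 1 := by ring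
      _ ≤ f * Real.sqrt l := mul_le_mul (by exact_mod_cast hf) hsl1 (by norm_num) (le_of_lt hf0)
    have h6 : (6:ℝ) ≤ 2*Real.pi*(f*Real.sqrt l) := by nlinarith
    calc (8*(l:ℝ))*3 = 4*(l:ℝ)*6 := by ring
    _ ≤ 4*l*(2*Real.pi*(f*Real.sqrt l)) := mul_le_mul_of_nonneg_left h6 (by positivity)
  have hKn : K ≤ 4*l - 1 := by
    have h1 : (K:ℝ) ≤ 4*l/3 := le_trans hKler hr43
    have h2 : (4*l/3 : ℝ) ≤ ((4*l-1 : ℕ) : ℝ) := by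
      have : ((4*l-1:ℕ):ℝ) = 4*(l:ℝ) - 1 := by
        push_cast [Nat.cast_sub (by omega : 1 ≤ 4*l)]
        ring
      rw [this]
      have hl2 : (2:ℝ) ≤ l := by exact_mod_cast hl
      linarith
    exact_mod_cast le_trans h1 h2
  have hbox : Finset.Icc (-(K:ℤ)) (K:ℤ) ⊆ Finset.Icc (-(4*l:ℤ)) (4*l-1) := by
    apply Finset.Icc_subset_Icc <;> [skip; skip] <;> push_cast <;> omega
  -- notation
  set n : ℕ := f * l^(f-1) with hn
  set N : ℕ := l^f with hN
  set cc : ℝ := 2*Real.pi/(8*l) with hcc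
  set G : (Col f l → ℤ) → ℝ :=
    fun J => ∏ p : Fin f → Fin l, 2 * Real.cos (cc * (tau f l J p : ℝ)) with hG
  -- lower bound on the big sum
  have hSum : ((2*K+1:ℕ):ℝ)^n * ((4:ℝ)^N * Real.exp (-(2 * (n:ℝ))))
      ≤ ∑ J ∈ Fintype.piFinset (fun _ : Col f l => Finset.Icc (-(4*l:ℤ)) (4*l-1)), (G J)^2 := by
    have hsub : Fintype.piFinset (fun _ : Col f l => Finset.Icc (-(K:ℤ)) (K:ℤ))
        ⊆ Fintype.piFinset (fun _ : Col f l => Finset.Icc (-(4*l:ℤ)) (4*l-1)) :=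
      Fintype.piFinset_subset _ _ (fun _ => hbox)
    refine le_trans ?_ (Finset.sum_le_sum_of_subset_of_nonneg hsub (fun J _ _ => sq_nonneg _))
    have hcard : (Fintype.piFinset (fun _ : Col f l => Finset.Icc (-(K:ℤ)) (K:ℤ))).card
        = (2*K+1)^n := by
      rw [Fintype.card_piFinset]
      rw [Finset.prod_const, Finset.card_univ, card_Col f l hl0']
      congr 1
      rw [Int.card_Icc]
      omega
    have hest : ∀ J ∈ Fintype.piFinset (fun _ : Col f l => Finset.Icc (-(K:ℤ)) (K:ℤ)),
        (4:ℝ)^N * Real.exp (-(2 * (n:ℝ))) ≤ (G J)^2 := by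
      intro J hJ
      have hJK : ∀ k : Col f l, |(J k : ℝ)| ≤ K := by
        intro k
        have := Fintype.mem_piFinset.mp hJ k
        rw [Finset.mem_Icc] at this
        rw [← Int.cast_abs]
        have : |J k| ≤ (K:ℤ) := abs_le.mpr this
        exact_mod_cast this
      have := estimate f l hf hl K hccK J hJK
      rw [hG]
      exact this
    calc ((2*K+1:ℕ):ℝ)^n * ((4:ℝ)^N * Real.exp (-(2 * (n:ℝ))))
        = ((Fintype.piFinset (fun _ : Col f l => Finset.Icc (-(K:ℤ)) (K:ℤ))).card : ℝ)
            * ((4:ℝ)^N * Real.exp (-(2 * (n:ℝ)))) := by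
          rw [hcard]; push_cast; ring
    _ ≤ ∑ J ∈ Fintype.piFinset (fun _ : Col f l => Finset.Icc (-(K:ℤ)) (K:ℤ)), (G J)^2 := by
          have := Finset.card_nsmul_le_sum
            (Fintype.piFinset (fun _ : Col f l => Finset.Icc (-(K:ℤ)) (K:ℤ)))
            (fun J => (G J)^2) ((4:ℝ)^N * Real.exp (-(2 * (n:ℝ)))) hest
          rw [nsmul_eq_mul] at this
          exact this
  -- the pair count
  set CNT : ℕ := (Finset.univ.filter
      (fun SS : ((Fin f → Fin l) → Bool) × ((Fin f → Fin l) → Bool) =>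
        ∀ k : Col f l, X f l (sgn f l SS.1) k = X f l (sgn f l SS.2) k)).card with hCNT
  have hmain : ((CNT:ℝ)) = (8*l:ℝ)⁻¹ ^ n *
      ∑ J ∈ Fintype.piFinset (fun _ : Col f l => Finset.Icc (-(4*l:ℤ)) (4*l-1)), (G J)^2 := by
    rw [hCNT, mainid f l hl0', card_Col f l hl0']
  -- lower bound CNT
  have hCNTlb : (2:ℝ)^N * (2:ℝ)^N * (Real.exp (-2) / (2*Real.pi) / (f * Real.sqrt l))^n
      ≤ (CNT:ℝ) := by
    rw [hmain]
    have step : ((8*l:ℝ)⁻¹)^n * (((2*K+1:ℕ):ℝ)^n * ((4:ℝ)^N * Real.exp (-(2 * (n:ℝ)))))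
        ≤ (8*l:ℝ)⁻¹ ^ n *
          ∑ J ∈ Fintype.piFinset (fun _ : Col f l => Finset.Icc (-(4*l:ℤ)) (4*l-1)), (G J)^2 :=
      mul_le_mul_of_nonneg_left hSum (by positivity)
    refine le_trans ?_ step
    have hexp : Real.exp (-(2 * (n:ℝ))) = (Real.exp (-2))^n := by
      rw [← Real.exp_nat_mul]
      congr 1
      ring
    rw [hexp]
    have h4 : (4:ℝ)^N = (2:ℝ)^N * (2:ℝ)^N := by
      rw [← mul_pow]; norm_num
    rw [h4]
    have keyineq : (Real.exp (-2) / (2*Real.pi) / (f * Real.sqrt l))^n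
        ≤ ((8*l:ℝ)⁻¹)^n * (((2*K+1:ℕ):ℝ)^n * (Real.exp (-2))^n) := by
      rw [← mul_pow, ← mul_pow]
      refine pow_le_pow_left₀ (by positivity) ?_ n
      have hlhs : Real.exp (-2) / (2*Real.pi) / (f * Real.sqrt l)
          = Real.exp (-2) * (1/(2*Real.pi*(f*Real.sqrt l))) := by
        field_simp
      have h2K1 : (8*l:ℝ) / (2*Real.pi*(f*Real.sqrt l)) ≤ ((2*K+1:ℕ):ℝ) := by
        push_cast
        calc (8*l:ℝ)/(2*Real.pi*(f*Real.sqrt l)) = r := by rw [hr]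
        _ ≤ 2*(K:ℝ)+1 := by linarith
      have hpos1 : (0:ℝ) < 2*Real.pi*(f*Real.sqrt l) := by positivity
      have h2K1' : (8*l:ℝ) ≤ ((2*K+1:ℕ):ℝ) * (2*Real.pi*(f*Real.sqrt l)) := by
        rw [div_le_iff₀ hpos1] at h2K1
        exact h2K1
      rw [hlhs]
      calc Real.exp (-2) * (1/(2*Real.pi*(f*Real.sqrt l)))
          ≤ Real.exp (-2) * (((2*K+1:ℕ):ℝ)/(8*l)) := by
            refine mul_le_mul_of_nonneg_left ?_ (le_of_lt (Real.exp_pos _))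
            rw [div_le_div_iff₀ hpos1 (by positivity)]
            linarith
      _ = (8*l:ℝ)⁻¹ * (((2*K+1:ℕ):ℝ) * Real.exp (-2)) := by ring
    calc (2:ℝ)^N * (2:ℝ)^N * (Real.exp (-2) / (2*Real.pi) / (f * Real.sqrt l))^n
        ≤ (2:ℝ)^N * (2:ℝ)^N * (((8*l:ℝ)⁻¹)^n * (((2*K+1:ℕ):ℝ)^n * (Real.exp (-2))^n)) :=
          mul_le_mul_of_nonneg_left keyineq (by positivity)
    _ = ((8*l:ℝ)⁻¹)^n * (((2*K+1:ℕ):ℝ)^n * ((2:ℝ)^N * (2:ℝ)^N * (Real.exp (-2))^n)) := by ring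
  -- pigeonhole
  have hsplit : (CNT:ℕ) = ∑ S' : (Fin f → Fin l) → Bool,
      ((Finset.univ.filter fun S : (Fin f → Fin l) → Bool =>
          ∀ k : Col f l, X f l (sgn f l S) k = X f l (sgn f l S') k).card) := by
    rw [hCNT, Finset.card_filter, Fintype.sum_prod_type_right]
    refine Fintype.sum_congr _ _ fun S' => ?_
    rw [Finset.card_filter]
  obtain ⟨S₀, _, hS₀⟩ := Finset.exists_max_image (Finset.univ : Finset ((Fin f → Fin l) → Bool))
    (fun S' => (Finset.univ.filter fun S : (Fin f → Fin l) → Bool =>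
        ∀ k : Col f l, X f l (sgn f l S) k = X f l (sgn f l S') k).card)
    ⟨fun _ => true, Finset.mem_univ _⟩
  refine ⟨S₀, ?_⟩
  have hub : (CNT:ℕ) ≤ 2^N * ((Finset.univ.filter fun S : (Fin f → Fin l) → Bool =>
      ∀ k : Col f l, X f l (sgn f l S) k = X f l (sgn f l S₀) k).card) := by
    rw [hsplit]
    calc ∑ S' : (Fin f → Fin l) → Bool, ((Finset.univ.filter fun S =>
          ∀ k : Col f l, X f l (sgn f l S) k = X f l (sgn f l S') k).card)
        ≤ ∑ _S' : (Fin f → Fin l) → Bool, ((Finset.univ.filter fun S =>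
          ∀ k : Col f l, X f l (sgn f l S) k = X f l (sgn f l S₀) k).card) :=
          Finset.sum_le_sum (fun S' _ => hS₀ S' (Finset.mem_univ _))
    _ = 2^N * _ := by
        rw [Finset.sum_const, Finset.card_univ]
        simp [Fintype.card_fun, hN, smul_eq_mul]
  have hub' : (CNT:ℝ) ≤ (2:ℝ)^N * ((Finset.univ.filter fun S : (Fin f → Fin l) → Bool =>
      ∀ k : Col f l, X f l (sgn f l S) k = X f l (sgn f l S₀) k).card : ℝ) := by
    exact_mod_cast hub
  have h2N : (0:ℝ) < (2:ℝ)^N := by positivity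
  nlinarith [hCNTlb, hub', h2N]

lemma colSum_update (T : (Fin f → Fin l) → ℤ) (b : Fin f) (y : Fin f → Fin l) :
    colSum f l T b (Function.update y b 0) = colSum f l T b y := by
  unfold colSum
  exact Finset.sum_congr rfl fun x _ => by rw [Function.update_idem]

lemma sgn_inj : Function.Injective (sgn f l) := by
  intro S S' h
  funext p
  have hp := congrFun h p
  unfold sgn at hp
  by_cases h1 : S p <;> by_cases h2 : S' p <;> simp_all

end

end Stmt5

/-- there is a constant `c > 0` such that for every `f ≥ 1` and every even
`l ≥ 2` there is a choice of integers `M_C`, one per column, such that the number of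
zero-energy assignments (±1 assignments whose every column sum equals the prescribed `M_C`)
is at least `2^N * (c/(f·√l))^{n_C}` with `N = l^f` and `n_C = f·l^(f-1)`. -/
theorem stmt5 :
    ∃ c : ℝ, 0 < c ∧
      ∀ f l : ℕ, 1 ≤ f → 2 ≤ l → Even l →
        ∃ M : Fin f → (Fin f → Fin l) → ℤ,
          (2 : ℝ) ^ (l ^ f) * (c / (f * Real.sqrt l)) ^ (f * l ^ (f - 1)) ≤
            (Set.ncard {S : (Fin f → Fin l) → ℤ |
              (∀ p, S p = 1 ∨ S p = -1) ∧ ∀ b y, colSum f l S b y = M b y} : ℝ) := by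
  refine ⟨Real.exp (-2) / (2*Real.pi), by positivity, ?_⟩
  intro f l hf hl _hev
  haveI : NeZero l := ⟨by omega⟩
  obtain ⟨S₀, hS₀⟩ := Stmt5.core f l hf hl
  refine ⟨fun b y => colSum f l (Stmt5.sgn f l S₀) b y, ?_⟩
  set F : Finset ((Fin f → Fin l) → Bool) :=
    Finset.univ.filter fun S : (Fin f → Fin l) → Bool =>
      ∀ k : Stmt5.Col f l, Stmt5.X f l (Stmt5.sgn f l S) k
        = Stmt5.X f l (Stmt5.sgn f l S₀) k with hF
  set T : Set ((Fin f → Fin l) → ℤ) :=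
    {S | (∀ p, S p = 1 ∨ S p = -1) ∧
      ∀ b y, colSum f l S b y = colSum f l (Stmt5.sgn f l S₀) b y} with hT
  have hfin : T.Finite := by
    have hsub : T ⊆ Set.pi Set.univ (fun _ : Fin f → Fin l => ({1, -1} : Set ℤ)) := by
      intro S hS
      intro p _
      rcases hS.1 p with h | h <;> simp [h]
    exact Set.Finite.subset (Set.Finite.pi (fun _ => (Set.finite_singleton (-1:ℤ)).insert 1)) hsub
  have himg : ((F.image (Stmt5.sgn f l)) : Set ((Fin f → Fin l) → ℤ)) ⊆ T := by
    intro S hS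
    rw [Finset.coe_image] at hS
    obtain ⟨S', hS', rfl⟩ := hS
    rw [Finset.mem_coe, hF, Finset.mem_filter] at hS'
    constructor
    · intro p
      unfold Stmt5.sgn
      split
      · left; rfl
      · right; rfl
    · intro b y
      have hk := hS'.2 ⟨b, Stmt5.rp f l b y⟩
      unfold Stmt5.X at hk
      simp only [Stmt5.rp] at hk
      rw [Stmt5.colSum_update, Stmt5.colSum_update] at hk
      exact hk
  have hcard : (F.card : ℝ) ≤ (T.ncard : ℝ) := by
    have h1 : (F.image (Stmt5.sgn f l)).card = F.card :=
      Finset.card_image_of_injective F (Stmt5.sgn_inj f l)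
    have h2 : ((F.image (Stmt5.sgn f l)) : Set ((Fin f → Fin l) → ℤ)).ncard
        = (F.image (Stmt5.sgn f l)).card := Set.ncard_coe_finset _
    have h3 := Set.ncard_le_ncard himg hfin
    rw [h2, h1] at h3
    exact_mod_cast h3
  exact le_trans hS₀ hcard
end

section
/- Fix integers f ≥ 1 and l ≥ 2 and integers M_C, one for each column C of the grid {1,…,l}^f. If S and S' are two distinct assignments {1,…,l}^f → {−1,+1} such that ∑_{i ∈ C} S i = M_C and ∑_{i ∈ C} S' i = M_C for every column C, then S and S' differ in at least 2^f grid points (their Hamming distance is at least 2^f). -/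
open Finset

lemma key : ∀ (f l : ℕ) (A : Finset (Fin f → Fin l)), A.Nonempty →
    (∀ p ∈ A, ∀ b : Fin f, ∃ q ∈ A, q b ≠ p b ∧ ∀ a, a ≠ b → q a = p a) →
    2 ^ f ≤ A.card := by
  intro f
  induction f with
  | zero =>
    intro l A hA _
    simpa [Finset.card_pos] using hA
  | succ f ih =>
    intro l A hA hprop
    obtain ⟨p, hp⟩ := hA
    obtain ⟨q, hq, hqb, _⟩ := hprop p hp (Fin.last f)
    set slice : Fin l → Finset (Fin f → Fin l) :=
      fun x => (A.filter (fun r => r (Fin.last f) = x)).image Fin.init with hslice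
    have hcard : ∀ x, (slice x).card = (A.filter (fun r => r (Fin.last f) = x)).card := by
      intro x
      apply Finset.card_image_of_injOn
      intro r1 h1 r2 h2 h
      simp only [Finset.mem_coe, Finset.mem_filter] at h1 h2
      funext a
      refine Fin.lastCases ?_ ?_ a
      · rw [h1.2, h2.2]
      · intro i
        exact congrFun h i
    have hmemslice : ∀ r ∈ A, Fin.init r ∈ slice (r (Fin.last f)) := by
      intro r hr
      exact Finset.mem_image.mpr ⟨r, Finset.mem_filter.mpr ⟨hr, rfl⟩, rfl⟩
    have hslbound : ∀ x, (slice x).Nonempty → 2 ^ f ≤ (slice x).card := by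
      intro x hx
      refine ih l (slice x) hx ?_
      intro r hr b
      obtain ⟨p0, hp0, hp0r⟩ := Finset.mem_image.mp hr
      obtain ⟨hp0A, hp0x⟩ := Finset.mem_filter.mp hp0
      obtain ⟨p', hp'A, hp'b, hp'a⟩ := hprop p0 hp0A b.castSucc
      have hlast : p' (Fin.last f) = x := by
        rw [hp'a (Fin.last f) (Fin.castSucc_lt_last b).ne', hp0x]
      refine ⟨Fin.init p', Finset.mem_image.mpr ⟨p', Finset.mem_filter.mpr ⟨hp'A, hlast⟩, rfl⟩,
        ?_, ?_⟩
      · simpa [Fin.init, ← hp0r] using hp'b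
      · intro a hab
        have : p' a.castSucc = p0 a.castSucc := by
          refine hp'a a.castSucc ?_
          simpa [Fin.castSucc_inj] using hab
        simpa [Fin.init, ← hp0r] using this
    have hfib : A.card = ∑ x : Fin l, (A.filter (fun r => r (Fin.last f) = x)).card :=
      Finset.card_eq_sum_card_fiberwise (fun r _ => Finset.mem_univ _)
    have h1 : 2 ^ f ≤ (A.filter (fun r => r (Fin.last f) = p (Fin.last f))).card := by
      rw [← hcard]
      exact hslbound _ ⟨Fin.init p, hmemslice p hp⟩
    have h2 : 2 ^ f ≤ (A.filter (fun r => r (Fin.last f) = q (Fin.last f))).card := by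
      rw [← hcard]
      exact hslbound _ ⟨Fin.init q, hmemslice q hq⟩
    calc 2 ^ (f + 1) = 2 ^ f + 2 ^ f := by ring
      _ ≤ (A.filter (fun r => r (Fin.last f) = p (Fin.last f))).card
          + (A.filter (fun r => r (Fin.last f) = q (Fin.last f))).card := add_le_add h1 h2
      _ = ∑ x ∈ ({p (Fin.last f), q (Fin.last f)} : Finset (Fin l)),
            (A.filter (fun r => r (Fin.last f) = x)).card := by
          rw [Finset.sum_pair hqb.symm]
      _ ≤ ∑ x : Fin l, (A.filter (fun r => r (Fin.last f) = x)).card :=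
          Finset.sum_le_sum_of_subset (Finset.subset_univ _)
      _ = A.card := hfib.symm

/-- two distinct ±1 assignments on the grid `{1,…,l}^f` with identical column
sums differ in at least `2^f` grid points. -/
theorem stmt6 (f l : ℕ) (hf : 1 ≤ f) (hl : 2 ≤ l)
    (S S' : (Fin f → Fin l) → ℤ)
    (hS : ∀ p, S p = 1 ∨ S p = -1) (hS' : ∀ p, S' p = 1 ∨ S' p = -1)
    (hM : ∀ b y, colSum f l S b y = colSum f l S' b y)
    (hne : S ≠ S') :
    2 ^ f ≤ (univ.filter (fun p => S p ≠ S' p)).card := by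
  set A := univ.filter (fun p => S p ≠ S' p) with hA
  obtain ⟨p0, hp0⟩ := Function.ne_iff.mp hne
  refine key f l A ⟨p0, Finset.mem_filter.mpr ⟨Finset.mem_univ _, hp0⟩⟩ ?_
  intro p hp b
  have hpne : S p ≠ S' p := (Finset.mem_filter.mp hp).2
  by_contra hcon
  push_neg at hcon
  have hzero : ∀ x, x ≠ p b → S (Function.update p b x) = S' (Function.update p b x) := by
    intro x hx
    by_contra hne2
    have hqA : Function.update p b x ∈ A :=
      Finset.mem_filter.mpr ⟨Finset.mem_univ _, hne2⟩
    obtain ⟨a, hab, hane⟩ := hcon _ hqA (by simpa using hx)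
    exact hane (Function.update_of_ne hab x p)
  have hsum : ∑ x : Fin l, (S (Function.update p b x) - S' (Function.update p b x)) = 0 := by
    rw [Finset.sum_sub_distrib]
    have := hM b p
    simp only [colSum] at this
    omega
  rw [Finset.sum_eq_single (p b)] at hsum
  · rw [Function.update_eq_self] at hsum
    exact hpne (by omega)
  · intro x _ hxne
    rw [hzero x hxne]; ring
  · simp
end

section
/- There exists a constant c > 0 such that for every integer f ≥ 1 and every even integer l ≥ 2, there is a choice of integers M_C, one for each column C, such that the Hamiltonian H(S) = ∑_{columns C} (∑_{i ∈ C} S i − M_C)^2 on assignments S : {1,…,l}^f → {−1,+1} has at least 2^N · (c/(f·√l))^{n_C} global minima, and every global minimum is a (2^f − 1)-minimum; here N = l^f and n_C = f·l^{f−1}. -/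
open Finset

/-- A ±1 assignment on the grid. -/
def gridValid {f l : ℕ} (S : (Fin f → Fin l) → ℤ) : Prop := ∀ p, S p = 1 ∨ S p = -1

/-- The Hamiltonian `H(S) = ∑_{columns C} (∑_{i ∈ C} S i - M_C)^2`, where each column is
represented by the unique pair `(b, y)` with `y b = z` (`z` a fixed base point). -/
def gridH (f l : ℕ) (z : Fin l) (M : Fin f → (Fin f → Fin l) → ℤ)
    (S : (Fin f → Fin l) → ℤ) : ℤ :=
  ∑ b : Fin f, ∑ y : Fin f → Fin l,
    if y b = z then (colSum f l S b y - M b y) ^ 2 else 0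

section gridHlemmas

variable {f l : ℕ} {z : Fin l} {M : Fin f → (Fin f → Fin l) → ℤ}

lemma gridH_nonneg (S : (Fin f → Fin l) → ℤ) : 0 ≤ gridH f l z M S := by
  apply Finset.sum_nonneg
  intro b _
  apply Finset.sum_nonneg
  intro y _
  split
  · positivity
  · exact le_rfl

lemma gridH_colSum_eq (S : (Fin f → Fin l) → ℤ) (hH : gridH f l z M S = 0)
    (b : Fin f) (y : Fin f → Fin l) (hyz : y b = z) : colSum f l S b y = M b y := by
  have hnn : ∀ b ∈ (univ : Finset (Fin f)), 0 ≤ ∑ y : Fin f → Fin l,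
      (if y b = z then (colSum f l S b y - M b y) ^ 2 else 0) := by
    intro b _
    apply Finset.sum_nonneg
    intro y _
    split
    · positivity
    · exact le_rfl
  have h1 := (Finset.sum_eq_zero_iff_of_nonneg hnn).mp hH b (mem_univ b)
  have hnn2 : ∀ y ∈ (univ : Finset (Fin f → Fin l)),
      0 ≤ (if y b = z then (colSum f l S b y - M b y) ^ 2 else 0) := by
    intro y _
    split
    · positivity
    · exact le_rfl
  have h2 := (Finset.sum_eq_zero_iff_of_nonneg hnn2).mp h1 y (mem_univ y)
  rw [if_pos hyz] at h2
  have := pow_eq_zero_iff (n := 2) (by norm_num) |>.mp h2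
  linarith [this]

lemma gridH_pos (S : (Fin f → Fin l) → ℤ) (b : Fin f) (y : Fin f → Fin l)
    (hyz : y b = z) (hne : colSum f l S b y ≠ M b y) : 0 < gridH f l z M S := by
  have hterm : (0:ℤ) < (if y b = z then (colSum f l S b y - M b y) ^ 2 else 0) := by
    rw [if_pos hyz]
    exact pow_two_pos_of_ne_zero (sub_ne_zero.mpr hne)
  have h1 : (if y b = z then (colSum f l S b y - M b y) ^ 2 else 0) ≤
      ∑ y' : Fin f → Fin l, (if y' b = z then (colSum f l S b y' - M b y') ^ 2 else 0) := by
    apply Finset.single_le_sum (fun y' _ => ?_) (mem_univ y)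
    split
    · positivity
    · exact le_rfl
  have h2 : ∑ y' : Fin f → Fin l, (if y' b = z then (colSum f l S b y' - M b y') ^ 2 else 0)
      ≤ gridH f l z M S := by
    apply Finset.single_le_sum (fun b' _ => ?_) (mem_univ b)
    apply Finset.sum_nonneg
    intro y' _
    split
    · positivity
    · exact le_rfl
  calc (0:ℤ) < _ := hterm
    _ ≤ _ := h1
    _ ≤ _ := h2

lemma colSum_base (S : (Fin f → Fin l) → ℤ) (b : Fin f) (y : Fin f → Fin l) (t : Fin l) :
    colSum f l S b (Function.update y b t) = colSum f l S b y := by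
  unfold colSum
  apply Finset.sum_congr rfl
  intro x _
  rw [Function.update_idem]

end gridHlemmas

lemma cube_lemma {f l : ℕ} (B : Finset (Fin f)) (D : Finset (Fin f → Fin l))
    (hne : D.Nonempty)
    (hline : ∀ b ∈ B, ∀ p ∈ D, ∃ x : Fin l,
      Function.update p b x ∈ D ∧ Function.update p b x ≠ p) :
    2 ^ B.card ≤ D.card := by
  classical
  induction B using Finset.induction_on generalizing D with
  | empty => simpa using hne.card_pos
  | @insert b B hb ih =>
    obtain ⟨p₀, hp₀⟩ := hne
    obtain ⟨x₀, hx₀D, hx₀ne⟩ := hline b (mem_insert_self b B) p₀ hp₀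
    have hx₀ : x₀ ≠ p₀ b := by
      intro h; apply hx₀ne; rw [h]; exact Function.update_eq_self b p₀
    have hsub : ∀ t : Fin l, ∀ a ∈ B, ∀ p ∈ D.filter (fun p => p b = t), ∃ x : Fin l,
        Function.update p a x ∈ D.filter (fun p => p b = t) ∧ Function.update p a x ≠ p := by
      intro t a ha p hp
      rw [mem_filter] at hp
      obtain ⟨x, hxD, hxne⟩ := hline a (mem_insert_of_mem ha) p hp.1
      refine ⟨x, ?_, hxne⟩
      rw [mem_filter]
      refine ⟨hxD, ?_⟩
      rw [Function.update_of_ne ?_ _ _, hp.2]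
      intro h; subst h; exact hb ha
    have h1 : 2 ^ B.card ≤ (D.filter (fun p => p b = p₀ b)).card :=
      ih _ ⟨p₀, by rw [mem_filter]; exact ⟨hp₀, rfl⟩⟩ (hsub (p₀ b))
    have h2 : 2 ^ B.card ≤ (D.filter (fun p => p b = x₀)).card :=
      ih _ ⟨Function.update p₀ b x₀, by
        rw [mem_filter]
        exact ⟨hx₀D, Function.update_self b x₀ p₀⟩⟩ (hsub x₀)
    have hdisj : Disjoint (D.filter (fun p => p b = p₀ b)) (D.filter (fun p => p b = x₀)) := by
      rw [Finset.disjoint_left]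
      intro p hp hp'
      rw [mem_filter] at hp hp'
      exact hx₀ (hp'.2 ▸ hp.2)
    calc 2 ^ (insert b B).card = 2 ^ B.card + 2 ^ B.card := by
          rw [Finset.card_insert_of_notMem hb]; ring
      _ ≤ (D.filter (fun p => p b = p₀ b)).card + (D.filter (fun p => p b = x₀)).card :=
          Nat.add_le_add h1 h2
      _ = ((D.filter (fun p => p b = p₀ b)) ∪ (D.filter (fun p => p b = x₀))).card :=
          (Finset.card_union_of_disjoint hdisj).symm
      _ ≤ D.card := Finset.card_le_card (by
          intro p hp
          rcases mem_union.mp hp with h | h <;> exact (mem_filter.mp h).1)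

lemma inv_quad_sum_nat (l : ℕ) (hl : 2 ≤ l) :
    ∑ k ∈ Finset.range (l+1), (1 + (k:ℝ)^2/(2*l))⁻¹ ≤ 6 * Real.sqrt l := by
  have hl0 : (0:ℝ) < l := by positivity
  set s := Nat.sqrt (2*l) with hs
  have hs2 : 2 ≤ s := by
    rw [hs]; exact Nat.le_sqrt.mpr (by omega)
  have hssq : s * s ≤ 2 * l := by
    have := Nat.sqrt_le' (2*l); rw [← hs] at this; nlinarith [this]
  have hlt : 2 * l < (s+1) * (s+1) := by
    have := Nat.lt_succ_sqrt' (2*l); rw [← hs] at this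
    calc 2*l < (s+1)^2 := this
      _ = (s+1)*(s+1) := sq (s+1)
  have hsl : s ≤ l := by nlinarith
  have h2l : 2 * l ≤ 2 * (s * s) := by nlinarith
  have hspos : (0:ℝ) < s := by
    have : (2:ℝ) ≤ s := by exact_mod_cast hs2
    linarith
  have hsplit : ∑ k ∈ Finset.range (l+1), (1 + (k:ℝ)^2/(2*l))⁻¹ =
      (∑ k ∈ Finset.range (s+1), (1 + (k:ℝ)^2/(2*l))⁻¹) +
      ∑ k ∈ Finset.Ico (s+1) (l+1), (1 + (k:ℝ)^2/(2*l))⁻¹ :=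
    (Finset.sum_range_add_sum_Ico _ (by omega)).symm
  have hhead : ∑ k ∈ Finset.range (s+1), (1 + (k:ℝ)^2/(2*l))⁻¹ ≤ (s:ℝ) + 1 := by
    calc ∑ k ∈ Finset.range (s+1), (1 + (k:ℝ)^2/(2*l))⁻¹
        ≤ ∑ k ∈ Finset.range (s+1), 1 := by
          apply Finset.sum_le_sum
          intro k _
          rw [inv_le_one_iff₀]
          exact Or.inr (le_add_of_nonneg_right (by positivity))
      _ = (s:ℝ) + 1 := by simp
  set F : ℕ → ℝ := fun j => 2*(l:ℝ)/((s:ℝ)+j) with hF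
  have htail : ∑ k ∈ Finset.Ico (s+1) (l+1), (1 + (k:ℝ)^2/(2*l))⁻¹ ≤ 2*(l:ℝ)/s := by
    rw [Finset.sum_Ico_eq_sum_range]
    have hterm : ∀ j : ℕ, (1 + ((s+1+j:ℕ):ℝ)^2/(2*l))⁻¹ ≤ F j - F (j+1) := by
      intro j
      have h1 : (0:ℝ) < (s:ℝ) + j := by positivity
      have h2 : (0:ℝ) < (s:ℝ) + 1 + j := by positivity
      have hcast : ((s+1+j:ℕ):ℝ) = (s:ℝ) + 1 + j := by push_cast; ring
      rw [hcast]
      have e1 : (1 + ((s:ℝ) + 1 + j)^2/(2*l))⁻¹ = 2*l/(2*l + ((s:ℝ)+1+j)^2) := by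
        rw [eq_div_iff (by positivity)]
        field_simp
      have e2 : F j - F (j+1) = 2*l/(((s:ℝ)+j) * ((s:ℝ)+1+j)) := by
        rw [hF]
        simp only [Nat.cast_add, Nat.cast_one]
        rw [div_sub_div _ _ (ne_of_gt h1) (by positivity)]
        have : ((s:ℝ)+j) * ((s:ℝ)+1+j) ≠ 0 := by positivity
        rw [div_eq_div_iff (by positivity) this]
        ring
      rw [e1, e2]
      apply div_le_div_of_nonneg_left (by positivity) (by positivity)
      nlinarith [sq_nonneg ((s:ℝ)+1+j)]
    calc ∑ j ∈ Finset.range (l+1-(s+1)), (1 + ((s+1+j:ℕ):ℝ)^2/(2*l))⁻¹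
        ≤ ∑ j ∈ Finset.range (l+1-(s+1)), (F j - F (j+1)) :=
          Finset.sum_le_sum (fun j _ => hterm j)
      _ = F 0 - F (l+1-(s+1)) := Finset.sum_range_sub' F (l+1-(s+1))
      _ ≤ F 0 := by
          have : (0:ℝ) ≤ F (l+1-(s+1)) := by rw [hF]; positivity
          linarith
      _ = 2*(l:ℝ)/s := by rw [hF]; simp
  have hsqrt : Real.sqrt l ^ 2 = l := Real.sq_sqrt (le_of_lt hl0)
  have hsqrt1 : (1:ℝ) ≤ Real.sqrt l := by
    rw [show (1:ℝ) = Real.sqrt 1 by simp]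
    apply Real.sqrt_le_sqrt
    have : (2:ℝ) ≤ l := by exact_mod_cast hl
    linarith
  have hs15 : (s:ℝ) ≤ 1.5 * Real.sqrt l := by
    have h1 : ((s:ℝ)) * s ≤ 2 * l := by exact_mod_cast hssq
    nlinarith [Real.sqrt_nonneg (l:ℝ), (Nat.cast_nonneg s : (0:ℝ) ≤ s)]
  have hdiv : 2*(l:ℝ)/s ≤ 2*s := by
    rw [div_le_iff₀ hspos]
    have : (2:ℝ)*l ≤ 2*(s*s) := by exact_mod_cast h2l
    nlinarith
  rw [hsplit]
  have : (s:ℝ) + 1 + 2*(s:ℝ) ≤ 6 * Real.sqrt l := by nlinarith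
  linarith


lemma inv_quad_sum_int (l : ℕ) (hl : 2 ≤ l) :
    ∑ d ∈ Finset.Icc (-(l:ℤ)) l, (1 + (d:ℝ)^2/(2*l))⁻¹ ≤ 12 * Real.sqrt l := by
  have hsplit : Finset.Icc (-(l:ℤ)) l = Finset.Icc (-(l:ℤ)) (-1) ∪ Finset.Icc (0:ℤ) l := by
    ext d; simp only [mem_Icc, mem_union]; omega
  have hdisj : Disjoint (Finset.Icc (-(l:ℤ)) (-1)) (Finset.Icc (0:ℤ) l) := by
    rw [Finset.disjoint_left]; intro d hd hd'
    simp only [mem_Icc] at hd hd'; omega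
  rw [hsplit, Finset.sum_union hdisj]
  have h1 : ∑ d ∈ Finset.Icc (0:ℤ) l, (1 + (d:ℝ)^2/(2*l))⁻¹ =
      ∑ k ∈ Finset.range (l+1), (1 + (k:ℝ)^2/(2*l))⁻¹ := by
    refine Finset.sum_nbij' (fun d => d.toNat) (fun k => (k:ℤ)) ?_ ?_ ?_ ?_ ?_
    · intro d hd; simp only [mem_Icc] at hd; simp only [mem_range]; omega
    · intro k hk; simp only [mem_range] at hk; simp only [mem_Icc]; omega
    · intro d hd; simp only [mem_Icc] at hd
      show ((d.toNat : ℕ) : ℤ) = d; omega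
    · intro k hk; simp
    · intro d hd
      simp only [mem_Icc] at hd
      have e : ((d.toNat : ℕ) : ℝ) = (d:ℝ) := by
        exact_mod_cast congrArg (fun z : ℤ => (z:ℝ)) (Int.toNat_of_nonneg hd.1)
      show (1 + (d:ℝ)^2/(2*l))⁻¹ = (1 + ((d.toNat : ℕ):ℝ)^2/(2*l))⁻¹
      rw [e]
  have h2 : ∑ d ∈ Finset.Icc (-(l:ℤ)) (-1), (1 + (d:ℝ)^2/(2*l))⁻¹ ≤
      ∑ k ∈ Finset.range (l+1), (1 + (k:ℝ)^2/(2*l))⁻¹ := by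
    have e : ∑ d ∈ Finset.Icc (-(l:ℤ)) (-1), (1 + (d:ℝ)^2/(2*l))⁻¹ =
        ∑ k ∈ Finset.Icc 1 l, (1 + (k:ℝ)^2/(2*l))⁻¹ := by
      refine Finset.sum_nbij' (fun d => (-d).toNat) (fun k => -(k:ℤ)) ?_ ?_ ?_ ?_ ?_
      · intro d hd; simp only [mem_Icc] at hd ⊢; omega
      · intro k hk; simp only [mem_Icc] at hk ⊢; omega
      · intro d hd; simp only [mem_Icc] at hd
        show -(((-d).toNat : ℕ) : ℤ) = d; omega
      · intro k hk; simp only [mem_Icc] at hk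
        show ((-(-(k:ℤ))).toNat : ℕ) = k; omega
      · intro d hd
        simp only [mem_Icc] at hd
        have h0 : (((-d).toNat : ℕ) : ℤ) = -d := by omega
        have e2 : (((-d).toNat : ℕ) : ℝ) = -(d:ℝ) := by
          exact_mod_cast congrArg (fun z : ℤ => (z:ℝ)) h0
        show (1 + (d:ℝ)^2/(2*l))⁻¹ = (1 + (((-d).toNat : ℕ):ℝ)^2/(2*l))⁻¹
        rw [e2]; ring_nf
    rw [e]
    apply Finset.sum_le_sum_of_subset_of_nonneg
    · intro k hk; simp only [mem_Icc] at hk; simp only [mem_range]; omega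
    · intro k _ _; positivity
  have := inv_quad_sum_nat l hl
  linarith

lemma counting_lemma {α : Type*} [DecidableEq α] {I : Type*} [Fintype I] [DecidableEq I]
    (Ω : Finset α) (hne : Ω.Nonempty) (Φ : α → I → ℤ) (g : ℤ → ℝ)
    (hg : ∀ s : ℤ, 0 < g s)
    (hsum : ∀ i : I, ∑ s ∈ (Ω.image (fun ω => Φ ω i)), g s ≤ 1)
    (β : ℝ)
    (hE : ∀ i : I, (-(Ω.card : ℝ)) * β ≤ ∑ ω ∈ Ω, Real.log (g (Φ ω i))) :
    ∃ v : I → ℤ, (Ω.card : ℝ) * (Real.exp (-β)) ^ (Fintype.card I) ≤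
      ((Ω.filter (fun ω => Φ ω = v)).card : ℝ) := by
  classical
  have hn : (0:ℝ) < Ω.card := by exact_mod_cast hne.card_pos
  set n : ℝ := (Ω.card : ℝ) with hnn
  set B := Ω.image Φ with hB
  have hBne : B.Nonempty := hne.image Φ
  set cnt : (I → ℤ) → ℕ := fun v => (Ω.filter (fun ω => Φ ω = v)).card with hcnt
  obtain ⟨w, hwB, hmax⟩ := B.exists_max_image (fun v => cnt v) hBne
  have hfib : ∀ F : (I → ℤ) → ℝ, ∑ v ∈ B, (cnt v : ℝ) * F v = ∑ ω ∈ Ω, F (Φ ω) := by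
    intro F
    rw [← Finset.sum_fiberwise_of_maps_to (fun ω hω => mem_image_of_mem Φ hω) (fun ω => F (Φ ω))]
    apply Finset.sum_congr rfl
    intro v _
    have h : ∑ ω ∈ Ω.filter (fun ω => Φ ω = v), F (Φ ω)
        = ∑ ω ∈ Ω.filter (fun ω => Φ ω = v), F v := by
      apply Finset.sum_congr rfl
      intro ω hω
      rw [(Finset.mem_filter.mp hω).2]
    rw [h, Finset.sum_const, nsmul_eq_mul]
  have hsum1 : ∑ v ∈ B, (cnt v : ℝ) = n := by
    have := hfib (fun _ => 1)
    simpa using this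
  have cpos : ∀ v ∈ B, (0:ℝ) < cnt v := by
    intro v hv
    obtain ⟨ω, hω, hϕ⟩ := Finset.mem_image.mp hv
    have : ω ∈ Ω.filter (fun ω => Φ ω = v) := Finset.mem_filter.mpr ⟨hω, hϕ⟩
    exact_mod_cast Finset.card_pos.mpr ⟨ω, this⟩
  set Q : (I → ℤ) → ℝ := fun v => ∏ i, g (v i) with hQ
  have Qpos : ∀ v, 0 < Q v := fun v => Finset.prod_pos (fun i _ => hg (v i))
  have hQsum : ∑ v ∈ B, Q v ≤ 1 := by
    have sub : B ⊆ Fintype.piFinset (fun i => Ω.image (fun ω => Φ ω i)) := by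
      intro v hv
      obtain ⟨ω, hω, hϕ⟩ := Finset.mem_image.mp hv
      rw [Fintype.mem_piFinset]
      intro i
      exact Finset.mem_image.mpr ⟨ω, hω, by rw [← hϕ]⟩
    calc ∑ v ∈ B, Q v ≤ ∑ v ∈ Fintype.piFinset (fun i => Ω.image (fun ω => Φ ω i)), Q v :=
          Finset.sum_le_sum_of_subset_of_nonneg sub (fun v _ _ => le_of_lt (Qpos v))
      _ = ∏ i, ∑ s ∈ Ω.image (fun ω => Φ ω i), g s := (Finset.prod_univ_sum _ _).symm
      _ ≤ 1 := Finset.prod_le_one (fun i _ => Finset.sum_nonneg (fun s _ => le_of_lt (hg s)))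
          (fun i _ => hsum i)
  -- Gibbs' inequality
  have gibbs : ∑ v ∈ B, ((cnt v : ℝ)/n) * Real.log (Q v) ≤
      ∑ v ∈ B, ((cnt v : ℝ)/n) * Real.log ((cnt v : ℝ)/n) := by
    have per : ∀ v ∈ B, ((cnt v : ℝ)/n) * Real.log (Q v) - ((cnt v : ℝ)/n) * Real.log ((cnt v : ℝ)/n)
        ≤ Q v - (cnt v : ℝ)/n := by
      intro v hv
      have hq : (0:ℝ) < (cnt v : ℝ)/n := div_pos (cpos v hv) hn
      have h1 : Real.log (Q v) - Real.log ((cnt v : ℝ)/n) = Real.log (Q v / ((cnt v : ℝ)/n)) :=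
        (Real.log_div (ne_of_gt (Qpos v)) (ne_of_gt hq)).symm
      have h2 : Real.log (Q v / ((cnt v : ℝ)/n)) ≤ Q v / ((cnt v : ℝ)/n) - 1 :=
        Real.log_le_sub_one_of_pos (div_pos (Qpos v) hq)
      calc ((cnt v : ℝ)/n) * Real.log (Q v) - ((cnt v : ℝ)/n) * Real.log ((cnt v : ℝ)/n)
          = ((cnt v : ℝ)/n) * (Real.log (Q v) - Real.log ((cnt v : ℝ)/n)) := by ring
        _ = ((cnt v : ℝ)/n) * Real.log (Q v / ((cnt v : ℝ)/n)) := by rw [h1]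
        _ ≤ ((cnt v : ℝ)/n) * (Q v / ((cnt v : ℝ)/n) - 1) :=
            mul_le_mul_of_nonneg_left h2 (le_of_lt hq)
        _ = Q v - (cnt v : ℝ)/n := by
            rw [mul_sub, mul_div_cancel₀ _ (ne_of_gt hq), mul_one]
    have hsumq : ∑ v ∈ B, (cnt v : ℝ)/n = 1 := by
      rw [← Finset.sum_div, hsum1, div_self (ne_of_gt hn)]
    have := Finset.sum_le_sum per
    rw [Finset.sum_sub_distrib, Finset.sum_sub_distrib, hsumq] at this
    linarith [hQsum]
  -- max step
  have maxstep : ∑ v ∈ B, ((cnt v : ℝ)/n) * Real.log ((cnt v : ℝ)/n) ≤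
      Real.log ((cnt w : ℝ)/n) := by
    have hsumq : ∑ v ∈ B, (cnt v : ℝ)/n = 1 := by
      rw [← Finset.sum_div, hsum1, div_self (ne_of_gt hn)]
    calc ∑ v ∈ B, ((cnt v : ℝ)/n) * Real.log ((cnt v : ℝ)/n)
        ≤ ∑ v ∈ B, ((cnt v : ℝ)/n) * Real.log ((cnt w : ℝ)/n) := by
          apply Finset.sum_le_sum
          intro v hv
          apply mul_le_mul_of_nonneg_left _ (le_of_lt (div_pos (cpos v hv) hn))
          have hcv : (cnt v : ℝ) ≤ cnt w := by exact_mod_cast hmax v hv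
          apply Real.log_le_log (div_pos (cpos v hv) hn)
          gcongr
      _ = Real.log ((cnt w : ℝ)/n) := by rw [← Finset.sum_mul, hsumq, one_mul]
  -- expectation step
  have estep : (-β) * Fintype.card I ≤ ∑ v ∈ B, ((cnt v : ℝ)/n) * Real.log (Q v) := by
    have e1 : ∑ v ∈ B, ((cnt v : ℝ)/n) * Real.log (Q v)
        = (1/n) * ∑ v ∈ B, (cnt v : ℝ) * Real.log (Q v) := by
      rw [Finset.mul_sum]
      apply Finset.sum_congr rfl
      intro v _; ring
    rw [e1, hfib (fun v => Real.log (Q v))]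
    have e2 : ∑ ω ∈ Ω, Real.log (Q (Φ ω)) = ∑ i : I, ∑ ω ∈ Ω, Real.log (g (Φ ω i)) := by
      rw [Finset.sum_comm]
      apply Finset.sum_congr rfl
      intro ω _
      rw [hQ]
      exact Real.log_prod (fun i _ => ne_of_gt (hg (Φ ω i)))
    rw [e2]
    have e3 : ∑ i : I, (-(n : ℝ)) * β ≤ ∑ i : I, ∑ ω ∈ Ω, Real.log (g (Φ ω i)) :=
      Finset.sum_le_sum (fun i _ => hE i)
    rw [Finset.sum_const] at e3
    have : (1/n) * (↑(Fintype.card I) • ((-(n : ℝ)) * β)) = (-β) * Fintype.card I := by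
      rw [nsmul_eq_mul]; field_simp
    calc (-β) * (Fintype.card I : ℝ) = (1/n) * (↑(Fintype.card I) • ((-(n : ℝ)) * β)) := this.symm
      _ ≤ (1/n) * ∑ i : I, ∑ ω ∈ Ω, Real.log (g (Φ ω i)) := by
          apply mul_le_mul_of_nonneg_left e3 (by positivity)
  -- finish
  refine ⟨w, ?_⟩
  have hlog : (-β) * Fintype.card I ≤ Real.log ((cnt w : ℝ)/n) :=
    le_trans estep (le_trans gibbs maxstep)
  have hqw : (0:ℝ) < (cnt w : ℝ)/n := div_pos (cpos w hwB) hn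
  have : Real.exp ((-β) * Fintype.card I) ≤ (cnt w : ℝ)/n := by
    calc Real.exp ((-β) * Fintype.card I) ≤ Real.exp (Real.log ((cnt w : ℝ)/n)) :=
          Real.exp_le_exp.mpr hlog
      _ = (cnt w : ℝ)/n := Real.exp_log hqw
  have hexp : Real.exp ((-β) * Fintype.card I) = Real.exp (-β) ^ (Fintype.card I) := by
    rw [← Real.exp_nat_mul]; ring_nf
  rw [← hexp]
  calc n * Real.exp ((-β) * Fintype.card I) ≤ n * ((cnt w : ℝ)/n) :=
        mul_le_mul_of_nonneg_left this (le_of_lt hn)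
    _ = (cnt w : ℝ) := by field_simp


-- cardinality of the column index set
lemma card_colIndex (f l : ℕ) (hf : 1 ≤ f) (z : Fin l) :
    Fintype.card {p : Fin f × (Fin f → Fin l) // p.2 p.1 = z} = f * l ^ (f - 1) := by
  have hl : 0 < l := Fin.pos z
  have e1 : {p : Fin f × (Fin f → Fin l) // p.2 p.1 = z} ≃
      Σ b : Fin f, {y : Fin f → Fin l // y b = z} :=
    { toFun := fun p => ⟨p.1.1, p.1.2, p.2⟩
      invFun := fun q => ⟨(q.1, q.2.1), q.2.2⟩
      left_inv := fun p => rfl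
      right_inv := fun q => rfl }
  rw [Fintype.card_congr e1, Fintype.card_sigma]
  have key : ∀ b : Fin f, Fintype.card {y : Fin f → Fin l // y b = z} = l ^ (f - 1) := by
    intro b
    have e2 : (Fin f → Fin l) ≃ Fin l × {y : Fin f → Fin l // y b = z} :=
      { toFun := fun y => (y b, ⟨Function.update y b z, Function.update_self b z y⟩)
        invFun := fun q => Function.update q.2.1 b q.1
        left_inv := fun y => by
          simp only []
          rw [Function.update_idem, Function.update_eq_self]
        right_inv := fun q => by
          obtain ⟨t, y, hy⟩ := q
          simp only []
          refine Prod.ext ?_ ?_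
          · exact Function.update_self b t y
          · apply Subtype.ext
            simp only []
            rw [Function.update_idem, ← hy, Function.update_eq_self]
      }
    have h3 : l ^ f = l * Fintype.card {y : Fin f → Fin l // y b = z} := by
      have := Fintype.card_congr e2
      rw [Fintype.card_prod, Fintype.card_fun, Fintype.card_fin, Fintype.card_fin] at this
      exact this
    have h5 : l * l ^ (f - 1) = l ^ f := by
      rw [← pow_succ', Nat.sub_add_cancel hf]
    have h4 : l * Fintype.card {y : Fin f → Fin l // y b = z} = l * l ^ (f - 1) := by
      rw [← h3, h5]
    exact Nat.eq_of_mul_eq_mul_left hl h4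
  simp [key]



section grid
variable (f l : ℕ)

abbrev gridΩ : Finset ((Fin f → Fin l) → ℤ) :=
  Fintype.piFinset (fun _ : (Fin f → Fin l) => ({1, -1} : Finset ℤ))

lemma mem_gridΩ (S : (Fin f → Fin l) → ℤ) : S ∈ gridΩ f l ↔ gridValid S := by
  rw [Fintype.mem_piFinset]
  unfold gridValid
  apply forall_congr'
  intro p
  simp [Finset.mem_insert, Finset.mem_singleton]

lemma card_gridΩ : (gridΩ f l).card = 2 ^ (l ^ f) := by
  rw [Fintype.card_piFinset]
  simp only [Finset.prod_const]
  have h1 : ({1, -1} : Finset ℤ).card = 2 := by decide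
  rw [h1, Finset.card_univ, Fintype.card_fun, Fintype.card_fin, Fintype.card_fin]

lemma cross_zero {p p' : Fin f → Fin l} (hne : p ≠ p') :
    ∑ S ∈ gridΩ f l, S p * S p' = 0 := by
  refine Finset.sum_involution (fun S _ => Function.update S p (-(S p))) ?_ ?_ ?_ ?_
  case refine_1 =>
    intro S hS
    beta_reduce
    have h1 : Function.update S p (-(S p)) p = -(S p) := Function.update_self _ _ _
    have h2 : Function.update S p (-(S p)) p' = S p' := Function.update_of_ne (Ne.symm hne) _ _
    rw [h1, h2]; ring
  case refine_2 =>
    intro S hS _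
    beta_reduce
    intro h
    have := congrFun h p
    rw [Function.update_self] at this
    have hv := (Fintype.mem_piFinset.mp hS) p
    simp only [Finset.mem_insert, Finset.mem_singleton] at hv
    rcases hv with h1 | h1 <;> rw [h1] at this <;> omega
  case refine_3 =>
    intro S hS
    beta_reduce
    rw [Fintype.mem_piFinset] at hS ⊢
    intro q
    by_cases hq : q = p
    · subst hq
      rw [Function.update_self]
      have hv := hS q
      simp only [Finset.mem_insert, Finset.mem_singleton] at hv ⊢
      omega
    · rw [Function.update_of_ne hq]
      exact hS q
  case refine_4 =>
    intro S hS
    beta_reduce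
    funext q
    by_cases hq : q = p
    · subst hq
      rw [Function.update_self, Function.update_self, neg_neg]
    · rw [Function.update_of_ne hq, Function.update_of_ne hq]

lemma self_sq {S : (Fin f → Fin l) → ℤ} (hS : S ∈ gridΩ f l) (p : Fin f → Fin l) :
    S p * S p = 1 := by
  have hv := (Fintype.mem_piFinset.mp hS) p
  simp only [Finset.mem_insert, Finset.mem_singleton] at hv
  rcases hv with h | h <;> rw [h] <;> ring

lemma secmom (b : Fin f) (y : Fin f → Fin l) :
    ∑ S ∈ gridΩ f l, (colSum f l S b y)^2 = (l : ℤ) * (gridΩ f l).card := by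
  have hupd : ∀ x x' : Fin l, Function.update y b x = Function.update y b x' → x = x' := by
    intro x x' h
    have := congrFun h b
    rwa [Function.update_self, Function.update_self] at this
  have expand : ∀ S : (Fin f → Fin l) → ℤ, (colSum f l S b y)^2 =
      ∑ x : Fin l, ∑ x' : Fin l, S (Function.update y b x) * S (Function.update y b x') := by
    intro S
    rw [colSum, sq, Finset.sum_mul_sum]
  rw [Finset.sum_congr rfl (fun S _ => expand S), Finset.sum_comm]
  have inner : ∀ x : Fin l, ∑ S ∈ gridΩ f l,
      ∑ x' : Fin l, S (Function.update y b x) * S (Function.update y b x')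
      = (gridΩ f l).card := by
    intro x
    rw [Finset.sum_comm]
    have : ∀ x' : Fin l, ∑ S ∈ gridΩ f l, S (Function.update y b x) * S (Function.update y b x')
        = if x' = x then ((gridΩ f l).card : ℤ) else 0 := by
      intro x'
      by_cases h : x' = x
      · subst h
        rw [if_pos rfl]
        rw [Finset.sum_congr rfl (fun S hS => self_sq f l hS _), Finset.sum_const,
          nsmul_eq_mul, mul_one]
      · rw [if_neg h]
        apply cross_zero
        intro hc
        exact h (hupd _ _ hc.symm)
    rw [Finset.sum_congr rfl (fun x' _ => this x')]
    simp
  rw [Finset.sum_congr rfl (fun x _ => inner x)]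
  simp [mul_comm]

lemma colSum_mem_Icc {S : (Fin f → Fin l) → ℤ} (hS : S ∈ gridΩ f l) (b : Fin f)
    (y : Fin f → Fin l) : colSum f l S b y ∈ Finset.Icc (-(l:ℤ)) l := by
  have habs : |colSum f l S b y| ≤ l := by
    calc |colSum f l S b y| ≤ ∑ x : Fin l, |S (Function.update y b x)| :=
          Finset.abs_sum_le_sum_abs _ _
      _ ≤ ∑ x : Fin l, 1 := by
          apply Finset.sum_le_sum
          intro x _
          have hv := (Fintype.mem_piFinset.mp hS) (Function.update y b x)
          simp only [Finset.mem_insert, Finset.mem_singleton] at hv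
          rcases hv with h | h <;> rw [h] <;> norm_num
      _ = l := by simp
  rw [Finset.mem_Icc]
  constructor <;> [linarith [neg_abs_le (colSum f l S b y)]; linarith [le_abs_self (colSum f l S b y)]]



theorem mainlemma (f l : ℕ) (hf : 1 ≤ f) (hl : 2 ≤ l) (z : Fin l) :
    ∃ M : Fin f → (Fin f → Fin l) → ℤ,
      ((2 : ℝ) ^ (l ^ f) * ((1/20 : ℝ) / (f * Real.sqrt l)) ^ (f * l ^ (f - 1)) ≤
        (Set.ncard {S : (Fin f → Fin l) → ℤ | gridValid S ∧ ∀ S', gridValid S' →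
          gridH f l z M S ≤ gridH f l z M S'} : ℝ)) ∧
      ∀ S : (Fin f → Fin l) → ℤ,
        (gridValid S ∧ ∀ S', gridValid S' → gridH f l z M S ≤ gridH f l z M S') →
        ∀ S', gridValid S' → S' ≠ S →
          (univ.filter (fun p => S p ≠ S' p)).card ≤ 2 ^ f - 1 →
          gridH f l z M S < gridH f l z M S' := by
  classical
  have hl0 : (0:ℝ) < l := by
    have : (2:ℝ) ≤ l := by exact_mod_cast hl
    linarith
  have hsl : 0 < Real.sqrt l := Real.sqrt_pos.mpr hl0
  set Z : ℝ := 12 * Real.sqrt l with hZdef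
  have hZ0 : (0:ℝ) < Z := by positivity
  set g : ℤ → ℝ := fun s => Z⁻¹ * (1 + (s:ℝ)^2/(2*l))⁻¹ with hgdef
  have hgpos : ∀ s : ℤ, 0 < g s := by
    intro s; rw [hgdef]; beta_reduce; positivity
  set β : ℝ := Real.log Z + 1/2 with hβdef
  set Φ : ((Fin f → Fin l) → ℤ) → {p : Fin f × (Fin f → Fin l) // p.2 p.1 = z} → ℤ :=
    fun S i => colSum f l S i.1.1 i.1.2 with hΦdef
  have hne : (gridΩ f l).Nonempty :=
    ⟨fun _ => 1, by rw [mem_gridΩ]; intro p; left; rfl⟩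
  have hsum : ∀ i : {p : Fin f × (Fin f → Fin l) // p.2 p.1 = z},
      ∑ s ∈ ((gridΩ f l).image (fun ω => Φ ω i)), g s ≤ 1 := by
    intro i
    have hsub : (gridΩ f l).image (fun ω => Φ ω i) ⊆ Finset.Icc (-(l:ℤ)) l := by
      intro s hs
      obtain ⟨S, hS, rfl⟩ := Finset.mem_image.mp hs
      exact colSum_mem_Icc f l hS _ _
    calc ∑ s ∈ ((gridΩ f l).image (fun ω => Φ ω i)), g s
        ≤ ∑ s ∈ Finset.Icc (-(l:ℤ)) l, g s :=
          Finset.sum_le_sum_of_subset_of_nonneg hsub (fun s _ _ => (hgpos s).le)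
      _ = Z⁻¹ * ∑ s ∈ Finset.Icc (-(l:ℤ)) l, (1 + (s:ℝ)^2/(2*l))⁻¹ := by
          rw [Finset.mul_sum]
      _ ≤ Z⁻¹ * (12 * Real.sqrt l) := by
          apply mul_le_mul_of_nonneg_left (inv_quad_sum_int l hl) (inv_nonneg.mpr hZ0.le)
      _ = 1 := by rw [← hZdef]; exact inv_mul_cancel₀ (ne_of_gt hZ0)
  have hE : ∀ i : {p : Fin f × (Fin f → Fin l) // p.2 p.1 = z},
      (-((gridΩ f l).card : ℝ)) * β ≤ ∑ ω ∈ gridΩ f l, Real.log (g (Φ ω i)) := by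
    intro i
    have hterm : ∀ S ∈ gridΩ f l,
        -Real.log Z - ((Φ S i : ℤ) : ℝ)^2/(2*l) ≤ Real.log (g (Φ S i)) := by
      intro S _
      have h1 : (0:ℝ) < 1 + ((Φ S i : ℤ) : ℝ)^2/(2*l) := by positivity
      have hlog : Real.log (g (Φ S i)) =
          -Real.log Z - Real.log (1 + ((Φ S i : ℤ) : ℝ)^2/(2*l)) := by
        rw [hgdef]
        beta_reduce
        rw [Real.log_mul (by positivity) (by positivity), Real.log_inv, Real.log_inv]
        ring
      have h2 : Real.log (1 + ((Φ S i : ℤ) : ℝ)^2/(2*l)) ≤ ((Φ S i : ℤ) : ℝ)^2/(2*l) := by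
        have := Real.log_le_sub_one_of_pos h1
        linarith
      rw [hlog]
      linarith
    have hsq : ∑ S ∈ gridΩ f l, ((Φ S i : ℤ) : ℝ)^2 = (l : ℝ) * ((gridΩ f l).card : ℝ) := by
      have h := secmom f l i.1.1 i.1.2
      exact_mod_cast h
    calc (-((gridΩ f l).card : ℝ)) * β
        = ∑ S ∈ gridΩ f l, (-Real.log Z - ((Φ S i : ℤ) : ℝ)^2/(2*l)) := by
          rw [Finset.sum_sub_distrib, Finset.sum_const, ← Finset.sum_div, hsq]
          rw [nsmul_eq_mul, hβdef]
          field_simp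
          ring
      _ ≤ ∑ S ∈ gridΩ f l, Real.log (g (Φ S i)) := Finset.sum_le_sum hterm
  obtain ⟨v, hv⟩ := counting_lemma (gridΩ f l) hne Φ g hgpos hsum β hE
  set M : Fin f → (Fin f → Fin l) → ℤ :=
    fun b y => if h : y b = z then v ⟨(b,y), h⟩ else 0 with hMdef
  set fiber := (gridΩ f l).filter (fun ω => Φ ω = v) with hfiberdef
  have hfibH : ∀ T ∈ fiber, gridH f l z M T = 0 := by
    intro T hT
    obtain ⟨hTΩ, hTv⟩ := Finset.mem_filter.mp hT
    unfold gridH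
    apply Finset.sum_eq_zero
    intro b _
    apply Finset.sum_eq_zero
    intro y _
    by_cases h : y b = z
    · rw [if_pos h]
      have hMv : M b y = v ⟨(b,y), h⟩ := by rw [hMdef]; beta_reduce; rw [dif_pos h]
      have hΦv : colSum f l T b y = v ⟨(b,y), h⟩ := congrFun hTv ⟨(b,y), h⟩
      rw [hMv, hΦv, sub_self]
      ring
    · rw [if_neg h]
  have hfib_sub : ∀ T ∈ fiber, gridValid T ∧ ∀ S', gridValid S' →
      gridH f l z M T ≤ gridH f l z M S' := by
    intro T hT
    refine ⟨(mem_gridΩ f l T).mp (Finset.mem_filter.mp hT).1, ?_⟩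
    intro S' _
    rw [hfibH T hT]
    exact gridH_nonneg S'
  have hcardΩpos : (0:ℝ) < ((gridΩ f l).card : ℝ) := by exact_mod_cast hne.card_pos
  have hfib_posR : (0:ℝ) < (fiber.card : ℝ) :=
    lt_of_lt_of_le (mul_pos hcardΩpos (pow_pos (Real.exp_pos _) _)) hv
  have hfib_ne : fiber.Nonempty := Finset.card_pos.mp (by exact_mod_cast hfib_posR)
  obtain ⟨T₀, hT₀⟩ := hfib_ne
  have hminH : ∀ S : (Fin f → Fin l) → ℤ,
      (gridValid S ∧ ∀ S', gridValid S' → gridH f l z M S ≤ gridH f l z M S') →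
      gridH f l z M S = 0 := by
    intro S hS
    refine le_antisymm ?_ (gridH_nonneg S)
    have h2 := hS.2 T₀ ((mem_gridΩ f l T₀).mp (Finset.mem_filter.mp hT₀).1)
    rw [hfibH T₀ hT₀] at h2
    exact h2
  refine ⟨M, ?_, ?_⟩
  · -- the counting bound
    set Min := {S : (Fin f → Fin l) → ℤ | gridValid S ∧ ∀ S', gridValid S' →
      gridH f l z M S ≤ gridH f l z M S'} with hMindef
    have hsubΩ : Min ⊆ ↑(gridΩ f l) := by
      intro S hS
      rw [Finset.mem_coe, mem_gridΩ]
      exact hS.1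
    have hfin : Min.Finite := Set.Finite.subset (gridΩ f l).finite_toSet hsubΩ
    have hsub2 : ↑fiber ⊆ Min := by
      intro T hT
      exact hfib_sub T (Finset.mem_coe.mp hT)
    have h2 : (fiber.card : ℝ) ≤ (Set.ncard Min : ℝ) := by
      have h3 := Set.ncard_le_ncard hsub2 hfin
      rw [Set.ncard_coe_finset] at h3
      exact_mod_cast h3
    have hcard2 : ((gridΩ f l).card : ℝ) = 2 ^ (l ^ f) := by
      rw [card_gridΩ]; push_cast; ring
    have hfpos : (0:ℝ) < f := by
      have : (1:ℝ) ≤ f := by exact_mod_cast hf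
      linarith
    have hkey : (1/20 : ℝ) / (f * Real.sqrt l) ≤ Real.exp (-β) := by
      have hexpβ : Real.exp (-β) = Real.exp (-(1/2)) * Z⁻¹ := by
        rw [hβdef, neg_add, Real.exp_add, Real.exp_neg (Real.log Z), Real.exp_log hZ0]
        ring
      have he2 : Real.exp (1/2 : ℝ) < 5/3 := by
        have h1 : Real.exp (1/2 : ℝ) * Real.exp (1/2 : ℝ) = Real.exp 1 := by
          rw [← Real.exp_add]; norm_num
        nlinarith [Real.exp_pos (1/2:ℝ), Real.exp_one_lt_d9]
      have he3 : (3/5 : ℝ) ≤ Real.exp (-(1/2 : ℝ)) := by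
        rw [Real.exp_neg]
        have h4 : ((5:ℝ)/3)⁻¹ ≤ (Real.exp (1/2:ℝ))⁻¹ :=
          inv_anti₀ (Real.exp_pos _) he2.le
        norm_num at h4
        linarith
      rw [hexpβ, hZdef]
      have hf1 : (1:ℝ) ≤ f := by exact_mod_cast hf
      have step1 : (1/20 : ℝ) / (f * Real.sqrt l) ≤ (1/20 : ℝ) / Real.sqrt l := by
        apply div_le_div_of_nonneg_left (by norm_num) hsl
        nlinarith [hf1, hsl]
      have step2 : (1/20 : ℝ) / Real.sqrt l = (3/5 : ℝ) * (12 * Real.sqrt l)⁻¹ := by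
        rw [mul_inv]
        field_simp
        ring
      calc (1/20 : ℝ) / (f * Real.sqrt l) ≤ (1/20 : ℝ) / Real.sqrt l := step1
        _ = (3/5 : ℝ) * (12 * Real.sqrt l)⁻¹ := step2
        _ ≤ Real.exp (-(1/2:ℝ)) * (12 * Real.sqrt l)⁻¹ := by
            apply mul_le_mul_of_nonneg_right he3 (by positivity)
    calc (2:ℝ)^(l^f) * ((1/20:ℝ)/(f*Real.sqrt l))^(f*l^(f-1))
        ≤ (2:ℝ)^(l^f) * (Real.exp (-β))^(f*l^(f-1)) := by
          apply mul_le_mul_of_nonneg_left _ (by positivity)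
          exact pow_le_pow_left₀ (by positivity) hkey _
      _ = ((gridΩ f l).card : ℝ) *
            (Real.exp (-β))^(Fintype.card {p : Fin f × (Fin f → Fin l) // p.2 p.1 = z}) := by
          rw [hcard2, card_colIndex f l hf z]
      _ ≤ (fiber.card : ℝ) := hv
      _ ≤ (Set.ncard Min : ℝ) := h2
  · -- strict minimality under few flips
    intro S hS S' hS' hne' hcard
    have hHS : gridH f l z M S = 0 := hminH S hS
    by_cases hall : ∀ (b : Fin f) (y : Fin f → Fin l), y b = z → colSum f l S' b y = M b y
    · exfalso
      have hcols : ∀ (b : Fin f) (p : Fin f → Fin l),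
          colSum f l S b p = colSum f l S' b p := by
        intro b p
        have hu : (Function.update p b z) b = z := Function.update_self b z p
        calc colSum f l S b p = colSum f l S b (Function.update p b z) :=
              (colSum_base S b p z).symm
          _ = M b (Function.update p b z) := gridH_colSum_eq S hHS b _ hu
          _ = colSum f l S' b (Function.update p b z) := (hall b _ hu).symm
          _ = colSum f l S' b p := colSum_base S' b p z
      have hDne : (univ.filter (fun p => S p ≠ S' p)).Nonempty := by
        have hSS : S ≠ S' := fun h => hne' h.symm
        obtain ⟨p, hp⟩ := Function.ne_iff.mp hSS
        exact ⟨p, Finset.mem_filter.mpr ⟨mem_univ p, hp⟩⟩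
      have hline : ∀ b ∈ (univ : Finset (Fin f)), ∀ p ∈ univ.filter (fun p => S p ≠ S' p),
          ∃ x : Fin l, Function.update p b x ∈ univ.filter (fun p => S p ≠ S' p) ∧
            Function.update p b x ≠ p := by
        intro b _ p hp
        by_contra hno
        push_neg at hno
        have hsum0 : ∑ x : Fin l,
            (S (Function.update p b x) - S' (Function.update p b x)) = 0 := by
          rw [Finset.sum_sub_distrib]
          have h5 := hcols b p
          unfold colSum at h5
          rw [h5, sub_self]
        have hsingle : ∑ x : Fin l,
            (S (Function.update p b x) - S' (Function.update p b x))
            = S (Function.update p b (p b)) - S' (Function.update p b (p b)) := by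
          apply Finset.sum_eq_single (p b)
          · intro x _ hx
            have hup : Function.update p b x ≠ p := by
              intro hcon
              have h6 := congrFun hcon b
              rw [Function.update_self] at h6
              exact hx h6
            have hnotD : Function.update p b x ∉ univ.filter (fun p => S p ≠ S' p) := by
              intro hmem
              exact hup (hno x hmem)
            rw [Finset.mem_filter, not_and] at hnotD
            have heq := hnotD (mem_univ _)
            rw [not_ne_iff] at heq
            rw [heq, sub_self]
          · intro h7
            exact absurd (mem_univ (p b)) h7
        rw [hsingle, Function.update_eq_self] at hsum0
        have hpD := Finset.mem_filter.mp hp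
        exact hpD.2 (by linarith)
      have hge := cube_lemma univ (univ.filter (fun p => S p ≠ S' p)) hDne hline
      rw [Finset.card_univ, Fintype.card_fin] at hge
      have h8 : 1 ≤ 2^f := Nat.one_le_two_pow
      omega
    · push_neg at hall
      obtain ⟨b, y, hyz, hne2⟩ := hall
      rw [hHS]
      exact gridH_pos S' b y hyz hne2


/-- there is a constant `c > 0` such that for all `f ≥ 1` and even `l ≥ 2`
there are integers `M_C` such that `H(S) = ∑_C (∑_{i∈C} S i - M_C)^2` has at least
`2^N (c/(f√l))^{n_C}` global minima, and every global minimum is a `(2^f - 1)`-minimum. -/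
theorem stmt7 :
    ∃ c : ℝ, 0 < c ∧
      ∀ (f l : ℕ), 1 ≤ f → ∀ (hl : 2 ≤ l), Even l →
        ∃ M : Fin f → (Fin f → Fin l) → ℤ,
          ((2 : ℝ) ^ (l ^ f) * (c / (f * Real.sqrt l)) ^ (f * l ^ (f - 1)) ≤
            (Set.ncard {S : (Fin f → Fin l) → ℤ | gridValid S ∧ ∀ S', gridValid S' →
              gridH f l ⟨0, by omega⟩ M S ≤ gridH f l ⟨0, by omega⟩ M S'} : ℝ)) ∧
          ∀ S : (Fin f → Fin l) → ℤ,
            (gridValid S ∧ ∀ S', gridValid S' →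
              gridH f l ⟨0, by omega⟩ M S ≤ gridH f l ⟨0, by omega⟩ M S') →
            ∀ S', gridValid S' → S' ≠ S →
              (univ.filter (fun p => S p ≠ S' p)).card ≤ 2 ^ f - 1 →
              gridH f l ⟨0, by omega⟩ M S < gridH f l ⟨0, by omega⟩ M S' := by
  refine ⟨1/20, by norm_num, ?_⟩
  intro f l hf hl _
  exact mainlemma f l hf hl ⟨0, by omega⟩
end grid
end

section
/- There exists a constant c > 0 such that for every integer f ≥ 1 and every integer l ≥ 2 the following holds. Let S be chosen uniformly at random from the assignments {1,…,l}^f → {−1,+1}, and let M(S) denote the vector, indexed by the n_C = f·l^{f−1} columns C, whose C-th entry is the column sum ∑_{i ∈ C} S i. Then ∑_{vectors M} Pr(M(S) = M)^2 ≥ (c/(f·√l))^{n_C}; in particular there exists a vector M with Pr(M(S) = M) ≥ (c/(f·√l))^{n_C}. -/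
open Finset

/-- The probability, for `S` uniform on ±1 assignments of the grid `{1,…,l}^f`, that all
column sums of `S` are given by `M` (as a ratio of counts). -/
noncomputable def colProb (f l : ℕ) (M : Fin f → (Fin f → Fin l) → ℤ) : ℝ :=
  (Set.ncard {S : (Fin f → Fin l) → ℤ |
      (∀ p, S p = 1 ∨ S p = -1) ∧ ∀ b y, colSum f l S b y = M b y} : ℝ) / 2 ^ (l ^ f)

lemma geom_half_formula (m : ℕ) : ∑ k ∈ Finset.range m, (1/2:ℝ)^k = 2 - 2*(1/2:ℝ)^m := by
  induction m with
  | zero => simp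
  | succ m ih =>
    rw [Finset.sum_range_succ, ih, pow_succ]
    ring

lemma geom_half_le (m : ℕ) : ∑ k ∈ Finset.range m, (1/2:ℝ)^k ≤ 2 := by
  rw [geom_half_formula]
  have : (0:ℝ) ≤ (1/2:ℝ)^m := by positivity
  linarith

lemma int_geom_le (B : ℕ) : ∑ a ∈ Finset.Icc (-(B:ℤ)) B, (1/2:ℝ)^(a.natAbs) ≤ 4 := by
  have hsplit : Finset.Icc (-(B:ℤ)) B = Finset.Icc (-(B:ℤ)) (-1) ∪ Finset.Icc 0 B := by
    ext a
    simp only [Finset.mem_Icc, Finset.mem_union]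
    omega
  have hdisj : Disjoint (Finset.Icc (-(B:ℤ)) (-1)) (Finset.Icc 0 B) := by
    rw [Finset.disjoint_left]
    intro a ha hb
    rw [Finset.mem_Icc] at ha hb
    omega
  rw [hsplit, Finset.sum_union hdisj]
  have hpos : Finset.Icc (0:ℤ) B = (Finset.range (B+1)).image (fun k : ℕ => (k:ℤ)) := by
    ext a
    simp only [Finset.mem_Icc, Finset.mem_image, Finset.mem_range]
    constructor
    · intro h; exact ⟨a.toNat, by omega, by omega⟩
    · rintro ⟨k, hk, rfl⟩; omega
  have hneg : Finset.Icc (-(B:ℤ)) (-1) = (Finset.range B).image (fun k : ℕ => -(k:ℤ)-1) := by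
    ext a
    simp only [Finset.mem_Icc, Finset.mem_image, Finset.mem_range]
    constructor
    · intro h; exact ⟨(-a-1).toNat, by omega, by omega⟩
    · rintro ⟨k, hk, rfl⟩; omega
  have h1 : ∑ a ∈ Finset.Icc (0:ℤ) B, (1/2:ℝ)^(a.natAbs) ≤ 2 := by
    rw [hpos, Finset.sum_image (by intro x _ y _ h; dsimp only at h; omega)]
    calc ∑ k ∈ Finset.range (B+1), (1/2:ℝ)^((k:ℤ).natAbs)
        = ∑ k ∈ Finset.range (B+1), (1/2:ℝ)^k := by
          apply Finset.sum_congr rfl; intro k _; norm_num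
      _ ≤ 2 := geom_half_le (B+1)
  have h2 : ∑ a ∈ Finset.Icc (-(B:ℤ)) (-1), (1/2:ℝ)^(a.natAbs) ≤ 2 := by
    rw [hneg, Finset.sum_image (by intro x _ y _ h; dsimp only at h; omega)]
    calc ∑ k ∈ Finset.range B, (1/2:ℝ)^((-(k:ℤ)-1).natAbs)
        = ∑ k ∈ Finset.range B, (1/2:ℝ)^(k+1) := by
          apply Finset.sum_congr rfl; intro k _; congr 1; omega
      _ ≤ ∑ k ∈ Finset.range B, (1/2:ℝ)^k := by
          apply Finset.sum_le_sum; intro k _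
          exact pow_le_pow_of_le_one (by norm_num) (by norm_num) (by omega)
      _ ≤ 2 := geom_half_le B
  linarith

lemma count_ball {ι : Type} [Fintype ι] [DecidableEq ι] (n L : ℕ) (hn : Fintype.card ι = n)
    (hL : 1 ≤ L) (V : Finset (ι → ℤ)) (hV : ∀ v ∈ V, ∑ i, (v i)^2 ≤ 2*(n:ℤ)*L) :
    (V.card : ℝ) ≤ (32 * ((Nat.sqrt L : ℝ) + 1))^n := by
  classical
  set s : ℕ := Nat.sqrt L + 1 with hs_def
  have hs : 0 < s := Nat.succ_pos _
  have hsz : (s:ℤ) ≠ 0 := by positivity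
  have hls : (L:ℤ) ≤ (s:ℤ)^2 := by
    have := Nat.lt_succ_sqrt' L
    push_cast [hs_def]
    push_cast at this
    nlinarith
  -- bound on sum of abs values
  have habs : ∀ v ∈ V, ∑ i, |v i| ≤ 2*(n:ℤ)*s := by
    intro v hv
    have hcs := Finset.sum_mul_sq_le_sq_mul_sq Finset.univ (fun i => |v i|) (fun _ => (1:ℤ))
    simp only [mul_one, one_pow, sq_abs] at hcs
    have hcard : ∑ _i : ι, (1:ℤ) = (n:ℤ) := by
      rw [Finset.sum_const, Finset.card_univ, hn]; simp
    rw [hcard] at hcs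
    have h1 : (∑ i, |v i|)^2 ≤ (2*(n:ℤ)*s)^2 := by
      calc (∑ i, |v i|)^2 ≤ (∑ i, (v i)^2) * n := hcs
        _ ≤ (2*(n:ℤ)*L) * n := by
            apply mul_le_mul_of_nonneg_right (hV v hv) (by positivity)
        _ ≤ (2*(n:ℤ)*s^2) * n := by
            have hmul := mul_le_mul_of_nonneg_left hls (show (0:ℤ) ≤ 2*(n:ℤ)*(n:ℤ) by positivity)
            nlinarith [hmul]
        _ ≤ (2*(n:ℤ)*s)^2 := by nlinarith [sq_nonneg ((n:ℤ)*(s:ℤ))]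
    have h2 : (0:ℤ) ≤ ∑ i, |v i| := Finset.sum_nonneg (fun i _ => abs_nonneg _)
    nlinarith [h1, h2, (show (0:ℤ) ≤ 2*(n:ℤ)*s by positivity)]
  -- the decomposition map
  set Φ : (ι → ℤ) → (ι → ℤ × ℤ) := fun v i => ((v i).ediv s, (v i).emod s) with hΦ
  have hrec : ∀ v : ι → ℤ, ∀ i, v i = (s:ℤ) * (v i).ediv s + (v i).emod s := by
    intro v i
    exact (Int.mul_ediv_add_emod (v i) s).symm
  have hΦinj : Set.InjOn Φ V := by
    intro v _ w _ h
    funext i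
    have h1 := congrFun h i
    rw [hΦ] at h1
    simp only [Prod.mk.injEq] at h1
    rw [hrec v i, hrec w i, h1.1, h1.2]
  have hqsum : ∀ v ∈ V, ∑ i, |(v i).ediv s| ≤ 3*(n:ℤ) := by
    intro v hv
    have hterm : ∀ i, (s:ℤ) * |(v i).ediv s| ≤ |v i| + s := by
      intro i
      have hr1 : 0 ≤ (v i).emod s := Int.emod_nonneg _ hsz
      have hr2 : (v i).emod s < s := Int.emod_lt_of_pos _ (by exact_mod_cast hs)
      have : (s:ℤ) * (v i).ediv s = v i - (v i).emod s := by
        have := hrec v i; omega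
      calc (s:ℤ) * |(v i).ediv s| = |(s:ℤ) * (v i).ediv s| := by
            rw [abs_mul, abs_of_nonneg (by positivity : (0:ℤ) ≤ (s:ℤ))]
        _ = |v i - (v i).emod s| := by rw [this]
        _ ≤ |v i| + |(v i).emod s| := abs_sub _ _
        _ ≤ |v i| + s := by
            have : |(v i).emod s| = (v i).emod s := abs_of_nonneg hr1
            omega
    have hsumterm : (s:ℤ) * ∑ i, |(v i).ediv s| ≤ ∑ i, |v i| + n * s := by
      rw [Finset.mul_sum]
      calc ∑ i, (s:ℤ) * |(v i).ediv s| ≤ ∑ i, (|v i| + s) := Finset.sum_le_sum (fun i _ => hterm i)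
        _ = ∑ i, |v i| + n * s := by
            rw [Finset.sum_add_distrib, Finset.sum_const, Finset.card_univ, hn]
            simp [mul_comm]
    have h3 : (s:ℤ) * ∑ i, |(v i).ediv s| ≤ 3 * n * s := by
      have := habs v hv
      linarith
    have hspos : (0:ℤ) < s := by exact_mod_cast hs
    nlinarith [hspos]
  -- now count the image
  rw [← Finset.card_image_of_injOn hΦinj]
  set W := V.image Φ with hW
  set pairs : Finset (ℤ × ℤ) :=
    (Finset.Icc (-(3*n:ℤ)) (3*n)) ×ˢ ((Finset.range s).image (fun k : ℕ => (k:ℤ))) with hpairs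
  set box : Finset (ι → ℤ × ℤ) := Fintype.piFinset (fun _ => pairs) with hbox
  have hWbox : W ⊆ box := by
    intro w hw
    rw [hW, Finset.mem_image] at hw
    obtain ⟨v, hv, rfl⟩ := hw
    rw [hbox, Fintype.mem_piFinset]
    intro i
    rw [hpairs, Finset.mem_product]
    constructor
    · rw [Finset.mem_Icc]
      have h1 : |(v i).ediv s| ≤ 3*(n:ℤ) := by
        calc |(v i).ediv s| ≤ ∑ j, |(v j).ediv s| :=
              Finset.single_le_sum (f := fun j => |(v j).ediv (s:ℤ)|)
                (fun j _ => abs_nonneg _) (Finset.mem_univ i)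
          _ ≤ 3*(n:ℤ) := hqsum v hv
      rw [abs_le] at h1
      exact h1
    · rw [Finset.mem_image]
      have hr1 : 0 ≤ (v i).emod s := Int.emod_nonneg _ hsz
      have hr2 : (v i).emod s < s := Int.emod_lt_of_pos _ (by exact_mod_cast hs)
      refine ⟨((v i).emod s).toNat, by rw [Finset.mem_range]; omega, ?_⟩
      simp only [hΦ]
      omega
  -- weight argument
  have hone : ∀ w ∈ W, (1:ℝ) ≤ 2^(3*n) * ∏ i, (1/2:ℝ)^((w i).1.natAbs) := by
    intro w hw
    rw [hW, Finset.mem_image] at hw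
    obtain ⟨v, hv, rfl⟩ := hw
    have hsum : ∑ i, ((v i).ediv s).natAbs ≤ 3*n := by
      have heq : ((∑ i, ((v i).ediv s).natAbs : ℕ) : ℤ) = ∑ i, |(v i).ediv (s:ℤ)| := by
        rw [Nat.cast_sum]
        exact Finset.sum_congr rfl (fun i _ => Int.natCast_natAbs _)
      have h2 : ((∑ i, ((v i).ediv s).natAbs : ℕ) : ℤ) ≤ ((3*n : ℕ) : ℤ) := by
        rw [heq]
        push_cast
        exact hqsum v hv
      exact_mod_cast h2
    have hprod : ∏ i, (1/2:ℝ)^(((Φ v) i).1.natAbs) = (1/2:ℝ)^(∑ i, ((v i).ediv s).natAbs) := by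
      rw [Finset.prod_pow_eq_pow_sum]
    rw [hprod]
    calc (1:ℝ) = (2 * (1/2:ℝ))^(3*n) := by norm_num
      _ = 2^(3*n) * (1/2:ℝ)^(3*n) := mul_pow _ _ _
      _ ≤ 2^(3*n) * (1/2:ℝ)^(∑ i, ((v i).ediv s).natAbs) := by
          apply mul_le_mul_of_nonneg_left _ (by positivity)
          exact pow_le_pow_of_le_one (by norm_num) (by norm_num) hsum
  -- sum the weights over the box
  have hcount : (W.card : ℝ) ≤ 2^(3*n) * ∑ w ∈ box, ∏ i, (1/2:ℝ)^((w i).1.natAbs) := by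
    calc (W.card : ℝ) = ∑ _w ∈ W, (1:ℝ) := by rw [Finset.sum_const]; simp
      _ ≤ ∑ w ∈ W, 2^(3*n) * ∏ i, (1/2:ℝ)^((w i).1.natAbs) := Finset.sum_le_sum hone
      _ ≤ ∑ w ∈ box, 2^(3*n) * ∏ i, (1/2:ℝ)^((w i).1.natAbs) := by
          apply Finset.sum_le_sum_of_subset_of_nonneg hWbox
          intro w _ _
          positivity
      _ = 2^(3*n) * ∑ w ∈ box, ∏ i, (1/2:ℝ)^((w i).1.natAbs) := by rw [Finset.mul_sum]
  have hboxsum : ∑ w ∈ box, ∏ i, (1/2:ℝ)^((w i).1.natAbs) ≤ (4*s:ℝ)^n := by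
    have hfact : ∑ w ∈ box, ∏ i, (1/2:ℝ)^((w i).1.natAbs)
        = ∏ _i : ι, ∑ p ∈ pairs, (1/2:ℝ)^(p.1.natAbs) := by
      rw [hbox]
      exact (Finset.prod_univ_sum (fun _ : ι => pairs) (fun _ p => (1/2:ℝ)^(p.1.natAbs))).symm
    rw [hfact]
    have hinner : ∑ p ∈ pairs, (1/2:ℝ)^(p.1.natAbs) ≤ 4*s := by
      rw [hpairs, Finset.sum_product]
      have hcardr : ((Finset.range s).image (fun k : ℕ => (k:ℤ))).card = s := by
        rw [Finset.card_image_of_injective _ (fun a b h => by omega), Finset.card_range]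
      calc ∑ a ∈ Finset.Icc (-(3*n:ℤ)) (3*n), ∑ _r ∈ (Finset.range s).image (fun k : ℕ => (k:ℤ)),
              (1/2:ℝ)^(a.natAbs)
          = ∑ a ∈ Finset.Icc (-(3*n:ℤ)) (3*n), (s:ℝ) * (1/2:ℝ)^(a.natAbs) := by
            apply Finset.sum_congr rfl; intro a _
            rw [Finset.sum_const, hcardr, nsmul_eq_mul]
        _ = (s:ℝ) * ∑ a ∈ Finset.Icc (-(3*n:ℤ)) (3*n), (1/2:ℝ)^(a.natAbs) := by
            rw [Finset.mul_sum]
        _ ≤ (s:ℝ) * 4 := by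
            apply mul_le_mul_of_nonneg_left (int_geom_le (3*n)) (by positivity)
        _ = 4*s := by ring
    calc ∏ _i : ι, ∑ p ∈ pairs, (1/2:ℝ)^(p.1.natAbs)
        ≤ ∏ _i : ι, (4*s:ℝ) := by
          apply Finset.prod_le_prod
          · intro i _; exact Finset.sum_nonneg (fun _ _ => by positivity)
          · intro i _; exact hinner
      _ = (4*s:ℝ)^n := by rw [Finset.prod_const, Finset.card_univ, hn]
  calc (W.card : ℝ) ≤ 2^(3*n) * (4*s:ℝ)^n := by
        have h2 : (0:ℝ) ≤ 2^(3*n) := by positivity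
        calc (W.card : ℝ) ≤ 2^(3*n) * ∑ w ∈ box, ∏ i, (1/2:ℝ)^((w i).1.natAbs) := hcount
          _ ≤ 2^(3*n) * (4*s:ℝ)^n := mul_le_mul_of_nonneg_left hboxsum h2
    _ = (32 * (s:ℝ))^n := by
        rw [pow_mul, ← mul_pow]
        congr 1
        ring
    _ = (32 * ((Nat.sqrt L : ℝ) + 1))^n := by
        rw [hs_def]
        push_cast
        ring_nf

namespace Stmt9

variable (f l : ℕ)

abbrev Pt (f l : ℕ) := Fin f → Fin l

def sgn (g : Pt f l → Bool) : Pt f l → ℤ := fun p => if g p then 1 else -1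

lemma sgn_apply_sq (g : Pt f l → Bool) (p : Pt f l) : sgn f l g p * sgn f l g p = 1 := by
  unfold sgn; split <;> norm_num

lemma sgn_inj : Function.Injective (sgn f l) := by
  intro g g' h
  funext p
  have := congrFun h p
  unfold sgn at this
  rcases hb : g p <;> rcases hb' : g' p <;> simp [hb, hb'] at this ⊢

lemma sgn_pm (g : Pt f l → Bool) (p : Pt f l) : sgn f l g p = 1 ∨ sgn f l g p = -1 := by
  unfold sgn; split <;> simp

lemma pm_eq_sgn (S : Pt f l → ℤ) (h : ∀ p, S p = 1 ∨ S p = -1) :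
    S = sgn f l (fun p => S p = 1) := by
  funext p
  rcases h p with h1 | h1 <;> simp [sgn, h1]

lemma card_univ_bool : (Finset.univ : Finset (Pt f l → Bool)).card = 2 ^ (l ^ f) := by
  simp [Finset.card_univ, Fintype.card_fun]

/-- orthogonality -/
lemma sum_sgn_mul (p q : Pt f l) (hpq : p ≠ q) :
    ∑ g : Pt f l → Bool, sgn f l g p * sgn f l g q = 0 := by
  classical
  refine Finset.sum_involution (fun g _ => Function.update g p (!(g p))) ?_ ?_ (fun g _ => Finset.mem_univ _) ?_
  · intro g _
    have hq : Function.update g p (!(g p)) q = g q := Function.update_of_ne (fun h => hpq h.symm) _ _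
    have hp : Function.update g p (!(g p)) p = !(g p) := Function.update_self _ _ _
    unfold sgn
    simp only [hq, hp]
    rcases hb : g p <;> rcases hc : g q <;> norm_num
  · intro g _ _ h
    have := congrFun h p
    simp only [Function.update_self] at this
    rcases hb : g p <;> rw [hb] at this <;> simp at this
  · intro g _
    funext r
    by_cases hr : r = p
    · subst hr; simp
    · simp [Function.update_of_ne hr]

def reps (b : Fin f) : Finset (Pt f l) := univ.filter (fun y => (y b : ℕ) = 0)

lemma card_reps (hl : 0 < l) (b : Fin f) : (reps f l b).card = l ^ (f - 1) := by
  classical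
  rw [reps, ← Fintype.card_subtype]
  have e : {y : Pt f l // (y b : ℕ) = 0} ≃ ({a : Fin f // a ≠ b} → Fin l) :=
    { toFun := fun y a => y.1 a.1
      invFun := fun g => ⟨fun a => if h : a = b then ⟨0, hl⟩ else g ⟨a, h⟩, by simp⟩
      left_inv := by
        intro y
        ext a
        by_cases h : a = b
        · subst h
          simpa using y.2.symm
        · simp [h]
      right_inv := by
        intro g
        funext a
        simp [a.2] }
  rw [Fintype.card_congr e, Fintype.card_fun]
  congr 1
  · exact Fintype.card_fin l
  · rw [Fintype.card_subtype_compl (p := fun a => a = b)]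
    simp [Fintype.card_subtype_eq]

def Q (S : Pt f l → ℤ) : ℤ := ∑ b : Fin f, ∑ y ∈ reps f l b, (colSum f l S b y)^2

lemma Q_nonneg (S : Pt f l → ℤ) : 0 ≤ Q f l S := by
  apply Finset.sum_nonneg
  intro b _
  apply Finset.sum_nonneg
  intro y _
  positivity

lemma sum_sq_colSum (b : Fin f) (y : Pt f l) :
    ∑ g : Pt f l → Bool, (colSum f l (sgn f l g) b y)^2 = 2^(l^f) * l := by
  classical
  have expand : ∀ g : Pt f l → Bool, (colSum f l (sgn f l g) b y)^2 =
      ∑ x : Fin l, ∑ x' : Fin l,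
        sgn f l g (Function.update y b x) * sgn f l g (Function.update y b x') := by
    intro g
    rw [sq, colSum, Finset.sum_mul_sum]
  simp only [expand]
  rw [Finset.sum_comm]
  have inner : ∀ x : Fin l, ∑ g : Pt f l → Bool, ∑ x' : Fin l,
      sgn f l g (Function.update y b x) * sgn f l g (Function.update y b x') = 2^(l^f) := by
    intro x
    rw [Finset.sum_comm]
    have : ∀ x' : Fin l, ∑ g : Pt f l → Bool,
        sgn f l g (Function.update y b x) * sgn f l g (Function.update y b x')
        = if x' = x then 2^(l^f) else 0 := by
      intro x'
      by_cases hxx : x' = x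
      · subst hxx
        rw [if_pos rfl]
        calc ∑ g : Pt f l → Bool, sgn f l g (Function.update y b x') * sgn f l g (Function.update y b x')
            = ∑ _g : Pt f l → Bool, (1:ℤ) := by
              apply Finset.sum_congr rfl; intro g _; exact sgn_apply_sq f l g _
          _ = 2^(l^f) := by simp [card_univ_bool]
      · rw [if_neg hxx]
        apply sum_sgn_mul
        intro hu
        exact hxx (by simpa using congrFun hu.symm b)
    rw [Finset.sum_congr rfl (fun x' _ => this x')]
    simp
  rw [Finset.sum_congr rfl (fun x _ => inner x)]
  simp [mul_comm]

lemma sum_Q (hl : 0 < l) :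
    ∑ g : Pt f l → Bool, Q f l (sgn f l g) = 2^(l^f) * (f * l^(f-1)) * l := by
  classical
  unfold Q
  rw [Finset.sum_comm]
  have hb : ∀ b, ∑ g : Pt f l → Bool, ∑ y ∈ reps f l b, (colSum f l (sgn f l g) b y)^2
      = (l:ℤ)^(f-1) * (2^(l^f) * l) := by
    intro b
    rw [Finset.sum_comm]
    rw [Finset.sum_congr rfl (fun y _ => sum_sq_colSum f l b y)]
    rw [Finset.sum_const, card_reps f l hl b]
    simp [nsmul_eq_mul]
  rw [Finset.sum_congr rfl (fun b _ => hb b)]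
  rw [Finset.sum_const, Finset.card_univ, Fintype.card_fin]
  push_cast
  ring

def GoodB : Finset (Pt f l → Bool) :=
  univ.filter (fun g => Q f l (sgn f l g) ≤ 2*(f*l^(f-1))*l)

lemma card_GoodB (hf : 1 ≤ f) (hl : 2 ≤ l) : 2^(l^f) ≤ 2 * (GoodB f l).card := by
  classical
  set n : ℕ := f * l^(f-1) with hn
  have hn1 : 1 ≤ n := Nat.one_le_iff_ne_zero.mpr (by positivity)
  set Bad : Finset (Pt f l → Bool) :=
    univ.filter (fun g => ¬ Q f l (sgn f l g) ≤ 2*(f*l^(f-1))*l) with hBad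
  have hsplit : (GoodB f l).card + Bad.card = 2^(l^f) := by
    rw [hBad, GoodB, Finset.card_filter_add_card_filter_not, card_univ_bool]
  have hsum : (Bad.card : ℤ) * (2*n*l + 1) ≤ 2^(l^f) * n * l := by
    calc (Bad.card : ℤ) * (2*n*l + 1) = ∑ _g ∈ Bad, ((2*(n:ℤ)*l + 1)) := by
          rw [Finset.sum_const, nsmul_eq_mul]
      _ ≤ ∑ g ∈ Bad, Q f l (sgn f l g) := by
          apply Finset.sum_le_sum
          intro g hg
          have hq := (Finset.mem_filter.mp hg).2
          push_cast [hn] at hq ⊢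
          omega
      _ ≤ ∑ g : Pt f l → Bool, Q f l (sgn f l g) := by
          apply Finset.sum_le_sum_of_subset_of_nonneg (Finset.filter_subset _ _)
          intro g _ _; exact Q_nonneg f l _
      _ = 2^(l^f) * (f * l^(f-1)) * l := sum_Q f l (by omega)
      _ = 2^(l^f) * n * l := by push_cast [hn]; ring
  have hbadlt : 2 * Bad.card < 2^(l^f) := by
    have h1 : (0:ℤ) < 2*n*l + 1 := by positivity
    have h2 : (2:ℤ) * Bad.card * (2*n*l+1) < 2^(l^f) * (2*n*l+1) := by
      calc (2:ℤ) * Bad.card * (2*n*l+1) = 2 * ((Bad.card : ℤ) * (2*n*l + 1)) := by ring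
        _ ≤ 2 * (2^(l^f) * n * l) := by linarith
        _ < 2^(l^f) * (2*n*l+1) := by
            have : (0:ℤ) < 2^(l^f) := by positivity
            nlinarith
    have := lt_of_mul_lt_mul_right h2 (le_of_lt h1)
    exact_mod_cast this
  omega

def Mmap (S : Pt f l → ℤ) : Fin f → Pt f l → ℤ := fun b y => colSum f l S b y

def fiberB (M : Fin f → Pt f l → ℤ) : Finset (Pt f l → Bool) :=
  univ.filter (fun g => Mmap f l (sgn f l g) = M)

lemma colProb_eq (M : Fin f → Pt f l → ℤ) :
    colProb f l M = ((fiberB f l M).card : ℝ) / 2^(l^f) := by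
  rw [colProb]
  congr 1
  have hset : {S : Pt f l → ℤ |
      (∀ p, S p = 1 ∨ S p = -1) ∧ ∀ b y, colSum f l S b y = M b y}
      = ↑((fiberB f l M).image (sgn f l)) := by
    ext S
    simp only [Set.mem_setOf_eq, Finset.coe_image, Set.mem_image, Finset.mem_coe]
    constructor
    · rintro ⟨h1, h2⟩
      refine ⟨fun p => S p = 1, ?_, (pm_eq_sgn f l S h1).symm⟩
      rw [fiberB, Finset.mem_filter]
      refine ⟨Finset.mem_univ _, ?_⟩
      funext b y
      rw [Mmap, ← pm_eq_sgn f l S h1]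
      exact h2 b y
    · rintro ⟨g, hg, rfl⟩
      rw [fiberB, Finset.mem_filter] at hg
      exact ⟨sgn_pm f l g, fun b y => congrFun (congrFun hg.2 b) y⟩
  rw [hset, Set.ncard_coe_finset, Finset.card_image_of_injective _ (sgn_inj f l)]

def Agood : Finset (Fin f → Pt f l → ℤ) := (GoodB f l).image (fun g => Mmap f l (sgn f l g))

def Afull : Finset (Fin f → Pt f l → ℤ) := univ.image (fun g => Mmap f l (sgn f l g))

lemma sum_fiber_ge : (GoodB f l).card ≤ ∑ M ∈ Agood f l, (fiberB f l M).card := by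
  classical
  rw [Finset.card_eq_sum_card_fiberwise (f := fun g => Mmap f l (sgn f l g))
    (t := Agood f l) (fun g hg => Finset.mem_image_of_mem _ hg)]
  apply Finset.sum_le_sum
  intro M _
  apply Finset.card_le_card
  intro g hg
  rw [Finset.mem_filter] at hg
  rw [fiberB, Finset.mem_filter]
  exact ⟨Finset.mem_univ _, hg.2⟩

lemma sum_fiber_le : ∑ M ∈ Agood f l, (fiberB f l M).card ≤ 2^(l^f) := by
  classical
  have h := Finset.card_eq_sum_card_fiberwise (f := fun g => Mmap f l (sgn f l g))
    (s := (univ : Finset (Pt f l → Bool))) (t := Afull f l)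
    (fun g hg => Finset.mem_image_of_mem _ hg)
  rw [card_univ_bool] at h
  rw [h]
  apply Finset.sum_le_sum_of_subset_of_nonneg
  · apply Finset.image_subset_image (Finset.filter_subset _ _)
  · intro M _ _
    exact Nat.zero_le _

lemma colProb_ne_zero (M : Fin f → Pt f l → ℤ) (h : colProb f l M ≠ 0) : M ∈ Afull f l := by
  rw [colProb_eq] at h
  have : (fiberB f l M).Nonempty := by
    rw [Finset.nonempty_iff_ne_empty]
    intro he
    rw [he] at h
    simp at h
  obtain ⟨g, hg⟩ := this
  rw [fiberB, Finset.mem_filter] at hg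
  exact Finset.mem_image.mpr ⟨g, Finset.mem_univ g, hg.2⟩


abbrev iot (f l : ℕ) := (b : Fin f) × {y : Pt f l // y ∈ reps f l b}

lemma card_iot (hl : 0 < l) : Fintype.card (iot f l) = f * l^(f-1) := by
  rw [show Fintype.card (iot f l) = Fintype.card ((b : Fin f) × {y : Pt f l // y ∈ reps f l b}) from rfl]
  rw [Fintype.card_sigma]
  rw [Finset.sum_congr rfl (fun b _ => by rw [Fintype.card_coe, card_reps f l hl b])]
  rw [Finset.sum_const, Finset.card_univ, Fintype.card_fin, smul_eq_mul]

def restrictM (M : Fin f → Pt f l → ℤ) : iot f l → ℤ := fun i => M i.1 i.2.1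

lemma colSum_update (S : Pt f l → ℤ) (b : Fin f) (y : Pt f l) (x : Fin l) :
    colSum f l S b (Function.update y b x) = colSum f l S b y := by
  unfold colSum
  apply Finset.sum_congr rfl
  intro x' _
  rw [Function.update_idem]

lemma update_mem_reps (hl : 0 < l) (b : Fin f) (y : Pt f l) :
    Function.update y b (⟨0,hl⟩ : Fin l) ∈ reps f l b := by
  rw [reps, Finset.mem_filter]
  exact ⟨Finset.mem_univ _, by simp⟩

lemma restrict_injOn (hl : 0 < l) : Set.InjOn (restrictM f l) ((Agood f l : Set (Fin f → Pt f l → ℤ))) := by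
  intro M hM M' hM' h
  rw [Finset.mem_coe, Agood, Finset.mem_image] at hM hM'
  obtain ⟨g, _, rfl⟩ := hM
  obtain ⟨g', _, rfl⟩ := hM'
  funext b y
  have key : ∀ g'' : Pt f l → Bool, Mmap f l (sgn f l g'') b y
      = restrictM f l (Mmap f l (sgn f l g'')) ⟨b, ⟨_, update_mem_reps f l hl b y⟩⟩ := by
    intro g''
    show Mmap f l (sgn f l g'') b y = Mmap f l (sgn f l g'') b (Function.update y b ⟨0,hl⟩)
    rw [Mmap, Mmap]
    exact (colSum_update f l _ b y _).symm
  rw [key g, key g', h]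

lemma sumsq_restrict (S : Pt f l → ℤ) :
    ∑ i : iot f l, (restrictM f l (Mmap f l S) i)^2 = Q f l S := by
  rw [Q]
  calc ∑ i : iot f l, (restrictM f l (Mmap f l S) i)^2
      = ∑ b : Fin f, ∑ y : {y : Pt f l // y ∈ reps f l b}, (colSum f l S b y.1)^2 := by
        rw [show (Finset.univ : Finset (iot f l))
          = (Finset.univ : Finset (Fin f)).sigma (fun b => (Finset.univ : Finset {y : Pt f l // y ∈ reps f l b}))
          from (Finset.univ_sigma_univ).symm]
        rw [Finset.sum_sigma]
        rfl
    _ = ∑ b : Fin f, ∑ y ∈ reps f l b, (colSum f l S b y)^2 := by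
        apply Finset.sum_congr rfl
        intro b _
        exact Finset.sum_coe_sort (reps f l b) (fun y => (colSum f l S b y)^2)

lemma card_Agood (hf : 1 ≤ f) (hl : 2 ≤ l) :
    ((Agood f l).card : ℝ) ≤ (32 * ((Nat.sqrt l : ℝ) + 1))^(f * l^(f-1)) := by
  classical
  have h0 : 0 < l := by omega
  rw [← Finset.card_image_of_injOn (restrict_injOn f l h0)]
  apply count_ball (f*l^(f-1)) l (card_iot f l h0) (by omega)
  intro v hv
  rw [Finset.mem_image] at hv
  obtain ⟨M, hM, rfl⟩ := hv
  rw [Agood, Finset.mem_image] at hM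
  obtain ⟨g, hg, rfl⟩ := hM
  rw [sumsq_restrict]
  have hQ := (Finset.mem_filter.mp hg).2
  push_cast at hQ ⊢
  linarith

lemma colProb_nonneg (M : Fin f → Pt f l → ℤ) : 0 ≤ colProb f l M := by
  rw [colProb_eq]
  positivity

end Stmt9

open Stmt9

/-- there is `c > 0` such that for all `f ≥ 1` and `l ≥ 2`,
`∑_M Pr(M(S) = M)^2 ≥ (c/(f√l))^{n_C}`, and in particular some `M` has
`Pr(M(S) = M) ≥ (c/(f√l))^{n_C}`, where `n_C = f·l^(f-1)`. -/
theorem stmt9 :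
    ∃ c : ℝ, 0 < c ∧
      ∀ f l : ℕ, 1 ≤ f → 2 ≤ l →
        ((c / (f * Real.sqrt l)) ^ (f * l ^ (f - 1)) ≤
          ∑' M : Fin f → (Fin f → Fin l) → ℤ, (colProb f l M) ^ 2) ∧
        ∃ M : Fin f → (Fin f → Fin l) → ℤ,
          (c / (f * Real.sqrt l)) ^ (f * l ^ (f - 1)) ≤ colProb f l M := by
  classical
  refine ⟨1/256, by norm_num, ?_⟩
  intro f l hf hl
  set n := f * l ^ (f-1) with hn
  have hl0 : 0 < l := by omega
  have hn1 : 1 ≤ n := by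
    have h1 : 0 < l ^ (f-1) := Nat.pow_pos hl0
    have : 0 < n := by rw [hn]; positivity
    omega
  have hsq1 : (1:ℝ) ≤ Real.sqrt l := Real.one_le_sqrt.mpr (by exact_mod_cast Nat.one_le_of_lt hl)
  have hsqpos : (0:ℝ) < Real.sqrt l := lt_of_lt_of_le one_pos hsq1
  have hf1 : (1:ℝ) ≤ (f:ℝ) := by exact_mod_cast hf
  have hnat_sqrt : ((Nat.sqrt l : ℝ)) ≤ Real.sqrt l := by
    rw [show ((Nat.sqrt l : ℝ)) = Real.sqrt ((Nat.sqrt l)^2) by rw [Real.sqrt_sq (by positivity)]]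
    apply Real.sqrt_le_sqrt
    have h := Nat.sqrt_le l
    have h2 : (Nat.sqrt l)^2 ≤ l := by nlinarith
    exact_mod_cast h2
  have hbase : (32:ℝ) * ((Nat.sqrt l : ℝ) + 1) ≤ 64 * Real.sqrt l := by linarith
  have hA : ((Agood f l).card : ℝ) ≤ (64*Real.sqrt l)^n :=
    le_trans (card_Agood f l hf hl) (pow_le_pow_left₀ (by positivity) hbase n)
  have hpnonneg : ∀ M, 0 ≤ colProb f l M := colProb_nonneg f l
  have hsumge : (1/2:ℝ) ≤ ∑ M ∈ Agood f l, colProb f l M := by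
    rw [Finset.sum_congr rfl (fun M _ => colProb_eq f l M), ← Finset.sum_div]
    rw [le_div_iff₀ (by positivity)]
    have h1' : ((GoodB f l).card:ℝ) ≤ ∑ M ∈ Agood f l, ((fiberB f l M).card:ℝ) := by
      exact_mod_cast sum_fiber_ge f l
    have h2' : (2:ℝ)^(l^f) ≤ 2*((GoodB f l).card:ℝ) := by exact_mod_cast card_GoodB f l hf hl
    linarith
  have hsumle : ∑ M ∈ Agood f l, colProb f l M ≤ 1 := by
    rw [Finset.sum_congr rfl (fun M _ => colProb_eq f l M), ← Finset.sum_div]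
    rw [div_le_one (by positivity)]
    exact_mod_cast sum_fiber_le f l
  have hGoodpos : 0 < (GoodB f l).card := by
    have h2 := card_GoodB f l hf hl
    have : 0 < 2^(l^f) := by positivity
    omega
  have hAne : (Agood f l).Nonempty := (Finset.card_pos.mp hGoodpos).image _
  have hApos : (0:ℝ) < (Agood f l).card := by exact_mod_cast Finset.card_pos.mpr hAne
  have hCS : (1/4 : ℝ) ≤ (∑ M ∈ Agood f l, (colProb f l M)^2) * (Agood f l).card := by
    have hcs := Finset.sum_mul_sq_le_sq_mul_sq (Agood f l) (fun M => colProb f l M) (fun _ => (1:ℝ))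
    simp only [mul_one, one_pow] at hcs
    rw [Finset.sum_const, nsmul_eq_mul, mul_one] at hcs
    nlinarith [hsumge]
  have hq2 : (1/4:ℝ)/(64*Real.sqrt l)^n ≤ ∑ M ∈ Agood f l, (colProb f l M)^2 := by
    rw [div_le_iff₀ (by positivity)]
    calc (1/4:ℝ) ≤ (∑ M ∈ Agood f l, (colProb f l M)^2) * (Agood f l).card := hCS
      _ ≤ (∑ M ∈ Agood f l, (colProb f l M)^2) * (64*Real.sqrt l)^n := by
          apply mul_le_mul_of_nonneg_left hA
          exact Finset.sum_nonneg (fun M _ => sq_nonneg _)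
  have hE : ((1/256:ℝ)/(f*Real.sqrt l))^n ≤ (1/4)/(64*Real.sqrt l)^n := by
    have hb1 : ((1/256:ℝ)/(f*Real.sqrt l)) ≤ (1/(256*Real.sqrt l)) := by
      rw [div_le_div_iff₀ (by positivity) (by positivity)]
      nlinarith
    calc ((1/256:ℝ)/(f*Real.sqrt l))^n ≤ (1/(256*Real.sqrt l))^n :=
          pow_le_pow_left₀ (by positivity) hb1 n
      _ = (1/4:ℝ)^n * (1/(64*Real.sqrt l))^n := by
          rw [← mul_pow]
          congr 1
          field_simp
          ring
      _ ≤ (1/4:ℝ) * (1/(64*Real.sqrt l))^n := by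
          apply mul_le_mul_of_nonneg_right _ (by positivity)
          calc (1/4:ℝ)^n ≤ (1/4:ℝ)^1 := pow_le_pow_of_le_one (by norm_num) (by norm_num) hn1
            _ = 1/4 := pow_one _
      _ = (1/4)/(64*Real.sqrt l)^n := by
          rw [div_pow, one_pow, div_eq_mul_inv (1/4:ℝ), div_eq_mul_inv (1:ℝ)]
          ring
  have hsummable : Summable (fun M => (colProb f l M) ^ 2) := by
    apply summable_of_ne_finset_zero (s := Afull f l)
    intro M hM
    have hz : colProb f l M = 0 := by
      by_contra hc
      exact hM (colProb_ne_zero f l M hc)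
    simp [hz]
  constructor
  · calc ((1/256:ℝ)/(f*Real.sqrt l))^n ≤ (1/4)/(64*Real.sqrt l)^n := hE
      _ ≤ ∑ M ∈ Agood f l, (colProb f l M)^2 := hq2
      _ ≤ ∑' M, (colProb f l M)^2 := Summable.sum_le_tsum _ (fun M _ => sq_nonneg _) hsummable
  · obtain ⟨M0, hM0, hmax⟩ := Finset.exists_max_image (Agood f l) (fun M => colProb f l M) hAne
    refine ⟨M0, ?_⟩
    calc ((1/256:ℝ)/(f*Real.sqrt l))^n ≤ (1/4)/(64*Real.sqrt l)^n := hE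
      _ ≤ ∑ M ∈ Agood f l, (colProb f l M)^2 := hq2
      _ ≤ ∑ M ∈ Agood f l, (colProb f l M) * colProb f l M0 := by
          apply Finset.sum_le_sum
          intro M hM
          have h1 := hmax M hM
          have h2 := hpnonneg M
          nlinarith
      _ = (∑ M ∈ Agood f l, colProb f l M) * colProb f l M0 := by rw [← Finset.sum_mul]
      _ ≤ 1 * colProb f l M0 := mul_le_mul_of_nonneg_right hsumle (hpnonneg M0)
      _ = colProb f l M0 := one_mul _
end

section
/- There exists a constant C > 0 such that the following holds. Let σ_1, …, σ_n be independent random variables, each uniform on {−1, +1}, let a_1, …, a_n be real numbers with |a_i| ≥ 1 for all i, and let Σ = ∑_{i=1}^n a_i σ_i. Then for every δ ≥ 1 and every real h, Pr(|Σ + h| ≤ δ) ≤ C·δ/√n. -/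
open Finset

lemma cB_sq (m : ℕ) : (Nat.centralBinom m)^2 * (2*m+1) ≤ 16^m := by
  induction m with
  | zero => simp [Nat.centralBinom]
  | succ m ih =>
    have h := Nat.succ_mul_centralBinom_succ m
    have hpos : 0 < (m+1)^2 := by positivity
    have key : (m+1)^2 * ((Nat.centralBinom (m+1))^2 * (2*(m+1)+1)) ≤ (m+1)^2 * 16^(m+1) := by
      calc (m+1)^2 * ((Nat.centralBinom (m+1))^2 * (2*(m+1)+1))
          = ((m+1) * Nat.centralBinom (m+1))^2 * (2*m+3) := by ring
        _ = (2*(2*m+1) * Nat.centralBinom m)^2 * (2*m+3) := by rw [h]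
        _ = (Nat.centralBinom m ^2 * (2*m+1)) * (4*(2*m+1)*(2*m+3)) := by ring
        _ ≤ 16^m * (4*(2*m+1)*(2*m+3)) := Nat.mul_le_mul_right _ ih
        _ ≤ 16^m * (16 * (m+1)^2) := by nlinarith
        _ = (m+1)^2 * 16^(m+1) := by ring
    exact Nat.le_of_mul_le_mul_left key hpos

lemma choose_half_sq (n : ℕ) : (n.choose (n/2))^2 * (n+1) ≤ 4^n := by
  rcases Nat.even_or_odd n with ⟨m, hm⟩ | ⟨m, hm⟩
  · subst hm
    have : (m+m)/2 = m := by omega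
    rw [this]
    have : (m+m).choose m = Nat.centralBinom m := by
      rw [Nat.centralBinom_eq_two_mul_choose]; ring_nf
    rw [this]
    calc (Nat.centralBinom m)^2*(m+m+1) = (Nat.centralBinom m)^2*(2*m+1) := by ring_nf
      _ ≤ 16^m := cB_sq m
      _ = 4^(m+m) := by rw [pow_add, ← mul_pow]; norm_num
  · subst hm
    have h2 : (2*m+1)/2 = m := by omega
    rw [h2]
    -- (2m+2) * choose(2m+1, m) = (m+1) * centralBinom (m+1)
    have hid : (2*m+2) * ((2*m+1).choose m) = (m+1) * Nat.centralBinom (m+1) := by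
      have h := Nat.add_one_mul_choose_eq (2*m+1) m
      rw [Nat.centralBinom_eq_two_mul_choose, show 2*(m+1) = 2*m+1+1 from by ring]
      rw [show 2*m+2 = 2*m+1+1 from by ring, h]
      ring
    have hcb := cB_sq (m+1)
    have hpos : 0 < 2*(2*m+2)*(2*m+3) := by positivity
    have key : (2*(2*m+2)*(2*m+3)) * (((2*m+1).choose m)^2 * (2*m+1+1)) ≤ (2*(2*m+2)*(2*m+3)) * 4^(2*m+1) := by
      calc (2*(2*m+2)*(2*m+3)) * (((2*m+1).choose m)^2 * (2*m+1+1))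
          = ((2*m+2) * ((2*m+1).choose m))^2 * (2*(2*m+3)) := by ring
        _ = ((m+1) * Nat.centralBinom (m+1))^2 * (2*(2*m+3)) := by rw [hid]
        _ = ((Nat.centralBinom (m+1))^2 * (2*(m+1)+1)) * (2*(m+1)^2) := by ring
        _ ≤ 16^(m+1) * (2*(m+1)^2) := Nat.mul_le_mul_right _ hcb
        _ ≤ (2*(2*m+2)*(2*m+3)) * 4^(2*m+1) := by
            have : (16:ℕ)^(m+1) = 4 * 4^(2*m+1) := by
              rw [show (16:ℕ) = 4^2 by norm_num, ← pow_mul]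
              rw [show 2*(m+1) = (2*m+1)+1 by ring, pow_succ]
              ring
            rw [this]; nlinarith
    exact Nat.le_of_mul_le_mul_left key hpos

lemma count_Ico {n : ℕ} (b : Fin n → ℝ) (hb : ∀ i, 1 ≤ b i) (x : ℝ) :
    (univ.filter (fun S : Finset (Fin n) => ∑ i ∈ S, b i ∈ Set.Ico x (x+1))).card
      ≤ n.choose (n/2) := by
  have hAC : IsAntichain (· ⊆ ·)
      ((univ.filter (fun S : Finset (Fin n) => ∑ i ∈ S, b i ∈ Set.Ico x (x+1))) :
        Set (Finset (Fin n))) := by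
    intro S hS T hT hne hST
    simp only [coe_filter, Set.mem_setOf_eq, mem_univ, true_and] at hS hT
    have hssub : S ⊂ T := lt_of_le_of_ne hST hne
    obtain ⟨j, hjT, hjS⟩ := exists_of_ssubset hssub
    have h1 : ∑ i ∈ S, b i + 1 ≤ ∑ i ∈ T, b i := by
      have : ∑ i ∈ insert j S, b i ≤ ∑ i ∈ T, b i := by
        apply sum_le_sum_of_subset_of_nonneg
        · intro k hk
          rcases mem_insert.1 hk with rfl | hk
          · exact hjT
          · exact hssub.1 hk
        · intro k _ _; linarith [hb k]
      rw [sum_insert hjS] at this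
      linarith [hb j]
    obtain ⟨hS1, hS2⟩ := hS
    obtain ⟨hT1, hT2⟩ := hT
    linarith
  have := IsAntichain.sperner hAC
  simpa using this

lemma card_transfer {n : ℕ} (P : Finset (Fin n) → Prop) [DecidablePred P] :
    (univ.filter (fun σ : Fin n → Bool => P (univ.filter (fun i => σ i = true)))).card
      = (univ.filter P).card := by
  apply Finset.card_nbij' (fun σ => univ.filter (fun i => σ i = true))
    (fun S => fun i => decide (i ∈ S))
  · intro σ hσ
    simp only [mem_coe, mem_filter, mem_univ, true_and]
    exact (mem_filter.1 hσ).2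
  · intro S hS
    simp only [mem_coe, mem_filter, mem_univ, true_and]
    have h : (univ.filter (fun i => decide (i ∈ S) = true)) = S := by
      ext i; simp
    rw [h]
    exact (mem_filter.1 hS).2
  · intro σ _
    funext i
    simp
  · intro S _
    ext i; simp

/-- there is `C > 0` such that for independent uniform ±1 variables
`σ_1, …, σ_n` (`n ≥ 1`) and reals `a_i` with `|a_i| ≥ 1`, for every `δ ≥ 1` and every `h`,
`Pr(|∑ a_i σ_i + h| ≤ δ) ≤ C·δ/√n` (probabilities as counting ratios over `{±1}^n`). -/
theorem stmt10 :
    ∃ C : ℝ, 0 < C ∧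
      ∀ (n : ℕ) (a : Fin n → ℝ), 1 ≤ n → (∀ i, 1 ≤ |a i|) →
        ∀ δ h : ℝ, 1 ≤ δ →
          (Set.ncard {σ : Fin n → Bool |
              |(∑ i, a i * (if σ i then 1 else -1)) + h| ≤ δ} : ℝ) / 2 ^ n ≤
            C * δ / Real.sqrt n := by
  classical
  refine ⟨2, by norm_num, ?_⟩
  intro n a hn ha δ h hδ
  set b : Fin n → ℝ := fun i => |a i| with hb_def
  have hb : ∀ i, 1 ≤ b i := ha
  -- ncard to Finset card
  have hncard : ({σ : Fin n → Bool | |(∑ i, a i * (if σ i then 1 else -1)) + h| ≤ δ} : Set _)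
      = ↑(univ.filter (fun σ : Fin n → Bool =>
          |(∑ i, a i * (if σ i then 1 else -1)) + h| ≤ δ)) := by
    ext σ; simp
  rw [hncard, Set.ncard_coe_finset]
  -- sign flip bijection
  set g : (Fin n → Bool) → (Fin n → Bool) := fun σ i => if a i < 0 then !(σ i) else σ i with hg_def
  have hg_inv : ∀ σ, g (g σ) = σ := by
    intro σ; funext i; simp only [hg_def]
    by_cases hai : a i < 0 <;> simp [hai]
  have hsum : ∀ σ, ∑ i, b i * (if g σ i then 1 else -1)
      = ∑ i, a i * (if σ i then 1 else -1) := by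
    intro σ
    apply Finset.sum_congr rfl
    intro i _
    by_cases hai : a i < 0
    · simp only [hg_def, if_pos hai, hb_def, abs_of_neg hai]
      cases hσ : σ i <;> simp <;> ring
    · simp only [hg_def, if_neg hai, hb_def, abs_of_nonneg (not_lt.1 hai)]
  have hflip : (univ.filter (fun σ : Fin n → Bool =>
        |(∑ i, a i * (if σ i then 1 else -1)) + h| ≤ δ)).card
      = (univ.filter (fun σ : Fin n → Bool =>
        |(∑ i, b i * (if σ i then 1 else -1)) + h| ≤ δ)).card := by
    apply Finset.card_nbij' g g
    · intro σ hσ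
      simp only [mem_coe, mem_filter, mem_univ, true_and] at *
      rw [hsum σ]
      exact hσ
    · intro σ hσ
      simp only [mem_coe, mem_filter, mem_univ, true_and] at *
      have h2 := hsum (g σ)
      rw [hg_inv σ] at h2
      rw [← h2]
      exact hσ
    · intro σ _; exact hg_inv σ
    · intro σ _; exact hg_inv σ
  rw [hflip]
  -- sum identity
  set B : ℝ := ∑ i, b i with hB_def
  set T : (Fin n → Bool) → ℝ := fun σ => ∑ i ∈ univ.filter (fun i => σ i = true), b i with hT_def
  have hiden : ∀ σ : Fin n → Bool,
      ∑ i, b i * (if σ i then 1 else -1) = 2 * T σ - B := by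
    intro σ
    have e0 := Finset.sum_filter_add_sum_filter_not univ (fun i => σ i = true)
      (fun i => b i * (if σ i then 1 else -1))
    have e0' := Finset.sum_filter_add_sum_filter_not univ (fun i => σ i = true) b
    have e1 : ∑ i ∈ univ.filter (fun i => σ i = true), b i * (if σ i then 1 else -1)
        = T σ := by
      apply Finset.sum_congr rfl
      intro i hi
      simp [(mem_filter.1 hi).2]
    have e2 : ∑ i ∈ univ.filter (fun i => ¬ σ i = true), b i * (if σ i then 1 else -1)
        = -∑ i ∈ univ.filter (fun i => ¬ σ i = true), b i := by
      rw [← Finset.sum_neg_distrib]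
      apply Finset.sum_congr rfl
      intro i hi
      have h3 := (mem_filter.1 hi).2
      simp only [Bool.not_eq_true] at h3
      simp [h3]
    rw [e1, e2] at e0
    have : ∑ i ∈ univ.filter (fun i => ¬ σ i = true), b i = B - T σ := by
      have hB : B = T σ + ∑ i ∈ univ.filter (fun i => ¬ σ i = true), b i := by
        simp only [hB_def, hT_def]
        exact e0'.symm
      linarith
    rw [this] at e0
    rw [← e0]; ring
  -- covering
  set x0 : ℝ := (B - h - δ) / 2 with hx0_def
  set K : ℕ := Nat.floor δ + 1 with hK_def
  have hsubset : (univ.filter (fun σ : Fin n → Bool =>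
        |(∑ i, b i * (if σ i then 1 else -1)) + h| ≤ δ))
      ⊆ (range K).biUnion (fun j => univ.filter (fun σ : Fin n → Bool =>
          T σ ∈ Set.Ico (x0 + j) ((x0 + j) + 1))) := by
    intro σ hσ
    simp only [mem_filter, mem_univ, true_and] at hσ
    rw [hiden σ, abs_le] at hσ
    have h1 : x0 ≤ T σ := by rw [hx0_def]; linarith [hσ.1]
    have h2 : T σ ≤ x0 + δ := by rw [hx0_def]; linarith [hσ.2]
    refine mem_biUnion.2 ⟨Nat.floor (T σ - x0), ?_, ?_⟩
    · rw [mem_range, hK_def]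
      exact Nat.lt_succ_of_le (Nat.floor_le_floor (by linarith))
    · simp only [mem_filter, mem_univ, true_and, Set.mem_Ico]
      constructor
      · have := Nat.floor_le (sub_nonneg.2 h1)
        linarith
      · have := Nat.lt_floor_add_one (T σ - x0)
        push_cast
        linarith
  -- counting
  have hcount : ∀ j : ℕ, (univ.filter (fun σ : Fin n → Bool =>
      T σ ∈ Set.Ico (x0 + j) ((x0 + j) + 1))).card ≤ n.choose (n/2) := by
    intro j
    rw [hT_def]
    rw [card_transfer (fun S : Finset (Fin n) => ∑ i ∈ S, b i ∈ Set.Ico (x0 + j) ((x0 + j) + 1))]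
    exact count_Ico b hb (x0 + j)
  have hcard : (univ.filter (fun σ : Fin n → Bool =>
        |(∑ i, b i * (if σ i then 1 else -1)) + h| ≤ δ)).card ≤ K * n.choose (n/2) := by
    calc (univ.filter (fun σ : Fin n → Bool =>
            |(∑ i, b i * (if σ i then 1 else -1)) + h| ≤ δ)).card
        ≤ ((range K).biUnion (fun j => univ.filter (fun σ : Fin n → Bool =>
            T σ ∈ Set.Ico (x0 + j) ((x0 + j) + 1)))).card := card_le_card hsubset
      _ ≤ ∑ j ∈ range K, (univ.filter (fun σ : Fin n → Bool =>
            T σ ∈ Set.Ico (x0 + j) ((x0 + j) + 1))).card := card_biUnion_le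
      _ ≤ ∑ _j ∈ range K, n.choose (n/2) := Finset.sum_le_sum (fun j _ => hcount j)
      _ = K * n.choose (n/2) := by rw [Finset.sum_const, card_range, smul_eq_mul]
  -- final arithmetic
  have hsq : ((n.choose (n/2) : ℝ))^2 * (n+1) ≤ 4^n := by
    exact_mod_cast choose_half_sq n
  have hsn : (0:ℝ) < Real.sqrt n := Real.sqrt_pos.2 (by exact_mod_cast hn)
  have hchoose : (n.choose (n/2) : ℝ) * Real.sqrt n ≤ 2^n := by
    have hnn : (0:ℝ) ≤ (n:ℝ) := Nat.cast_nonneg n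
    have hc0 : (0:ℝ) ≤ (n.choose (n/2) : ℝ) := Nat.cast_nonneg _
    have hs : ((n.choose (n/2) : ℝ) * Real.sqrt n)^2 ≤ ((2:ℝ)^n)^2 := by
      rw [mul_pow, Real.sq_sqrt hnn, ← pow_mul]
      calc (n.choose (n/2) : ℝ)^2 * n ≤ (n.choose (n/2) : ℝ)^2 * (n+1) := by nlinarith
        _ ≤ 4^n := hsq
        _ = 2^(n*2) := by rw [show (4:ℝ) = 2^2 by norm_num, ← pow_mul, mul_comm]
    have h1 : (0:ℝ) ≤ (n.choose (n/2) : ℝ) * Real.sqrt n := by positivity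
    have h2 : (0:ℝ) ≤ (2:ℝ)^n := by positivity
    nlinarith
  have hK : (K:ℝ) ≤ 2 * δ := by
    rw [hK_def]
    push_cast
    have := Nat.floor_le (le_trans zero_le_one hδ)
    linarith
  have h2n : (0:ℝ) < (2:ℝ)^n := by positivity
  rw [div_le_div_iff₀ h2n hsn]
  calc ((univ.filter (fun σ : Fin n → Bool =>
        |(∑ i, b i * (if σ i then 1 else -1)) + h| ≤ δ)).card : ℝ) * Real.sqrt n
      ≤ ((K : ℝ) * (n.choose (n/2) : ℝ)) * Real.sqrt n := by
        apply mul_le_mul_of_nonneg_right _ hsn.le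
        exact_mod_cast hcard
    _ = (K : ℝ) * ((n.choose (n/2) : ℝ) * Real.sqrt n) := by ring
    _ ≤ (2 * δ) * (2^n) := by
        apply mul_le_mul hK hchoose (by positivity) (by linarith)
    _ = 2 * δ * 2^n := by ring
end
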